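/- arXiv:math-ph/0112051 — 5 statements merged into one kernel-verified Lean document; each statement's English description precedes it below -/
import Mathlib

section
/- Let ν(λ, λ₁, λ₂) = (1/2)(λ + (λ₁+λ₂)/2 + √((λ-λ₁)(λ-λ₂))) for an analytic branch of the square root. Then ν satisfies ∂ν/∂λ₁ = -α₁/(ν - γ₁) and ∂ν/∂λ₂ = -α₂/(ν - γ₂), where γ₁ = (3λ₁+λ₂)/4, γ₂ = (λ₁+3λ₂)/4, α₁ = (λ₁-λ₂)/8, and α₂ = -(λ₁-λ₂)/8. -/
/-- For a holomorphic branch `s` of `√((λ-λ₁)(λ-λ₂))`, the function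
`ν(λ,λ₁,λ₂) = (1/2)(λ + (λ₁+λ₂)/2 + s)` satisfies
`∂ν/∂λ₁ = -α₁/(ν-γ₁)` and `∂ν/∂λ₂ = -α₂/(ν-γ₂)` with
`γ₁ = (3λ₁+λ₂)/4`, `γ₂ = (λ₁+3λ₂)/4`, `α₁ = (λ₁-λ₂)/8 = -α₂`. -/
theorem stmt1 (lam l1 l2 : ℂ) (hne : l1 ≠ l2)
    (s : ℂ × ℂ → ℂ) (hd : DifferentiableAt ℂ s (l1, l2))
    (hsq : ∀ᶠ p in nhds (l1, l2), s p ^ 2 = (lam - p.1) * (lam - p.2))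
    (hs0 : s (l1, l2) ≠ 0) :
    let ν : ℂ × ℂ → ℂ := fun p => (1 / 2) * (lam + (p.1 + p.2) / 2 + s p)
    deriv (fun x => ν (x, l2)) l1
        = -((l1 - l2) / 8) / (ν (l1, l2) - (3 * l1 + l2) / 4) ∧
    deriv (fun y => ν (l1, y)) l2
        = -(-(l1 - l2) / 8) / (ν (l1, l2) - (l1 + 3 * l2) / 4) := by
  intro ν
  set S := s (l1, l2) with hS
  have hsq0 : S ^ 2 = (lam - l1) * (lam - l2) := hsq.self_of_nhds
  -- inner maps
  have hin1 : DifferentiableAt ℂ (fun x : ℂ => (x, l2)) l1 :=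
    (differentiableAt_id.prodMk (differentiableAt_const _))
  have hin2 : DifferentiableAt ℂ (fun y : ℂ => (l1, y)) l2 :=
    ((differentiableAt_const _).prodMk differentiableAt_id)
  have hds1 : DifferentiableAt ℂ (fun x => s (x, l2)) l1 := hd.comp l1 hin1
  have hds2 : DifferentiableAt ℂ (fun y => s (l1, y)) l2 := hd.comp l2 hin2
  set d1 := deriv (fun x => s (x, l2)) l1 with hd1def
  set d2 := deriv (fun y => s (l1, y)) l2 with hd2def
  -- pull back the eventual equation
  have hc1 : Filter.Tendsto (fun x : ℂ => (x, l2)) (nhds l1) (nhds (l1, l2)) :=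
    (Continuous.prodMk continuous_id continuous_const).continuousAt
  have hc2 : Filter.Tendsto (fun y : ℂ => (l1, y)) (nhds l2) (nhds (l1, l2)) :=
    (Continuous.prodMk continuous_const continuous_id).continuousAt
  have hE1 : ∀ᶠ x in nhds l1, s (x, l2) ^ 2 = (lam - x) * (lam - l2) := hc1.eventually hsq
  have hE2 : ∀ᶠ y in nhds l2, s (l1, y) ^ 2 = (lam - l1) * (lam - y) := hc2.eventually hsq
  -- key derivative relations
  have hkey1 : 2 * S * d1 = -(lam - l2) := by
    have hL : HasDerivAt (fun x => s (x, l2) ^ 2) (2 * S ^ 1 * d1) l1 := by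
      simpa using (hds1.hasDerivAt.fun_pow 2)
    have hR : HasDerivAt (fun x : ℂ => (lam - x) * (lam - l2)) (-1 * (lam - l2)) l1 :=
      ((hasDerivAt_id l1).const_sub lam).mul_const (lam - l2)
    have := (Filter.EventuallyEq.deriv_eq hE1 : deriv (fun x => s (x, l2) ^ 2) l1 = _)
    rw [hL.deriv, hR.deriv] at this
    linear_combination this
  have hkey2 : 2 * S * d2 = -(lam - l1) := by
    have hL : HasDerivAt (fun y => s (l1, y) ^ 2) (2 * S ^ 1 * d2) l2 := by
      simpa using (hds2.hasDerivAt.fun_pow 2)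
    have hR : HasDerivAt (fun y : ℂ => (lam - l1) * (lam - y)) ((lam - l1) * (-1)) l2 :=
      ((hasDerivAt_id l2).const_sub lam).const_mul (lam - l1)
    have := (Filter.EventuallyEq.deriv_eq hE2 : deriv (fun y => s (l1, y) ^ 2) l2 = _)
    rw [hL.deriv, hR.deriv] at this
    linear_combination this
  -- derivatives of ν
  have hν1 : HasDerivAt (fun x => (1 / 2 : ℂ) * (lam + (x + l2) / 2 + s (x, l2)))
      (1 / 2 * (1 / 2 + d1)) l1 := by
    exact ((((((hasDerivAt_id l1).add_const l2).div_const 2).const_add lam).add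
      hds1.hasDerivAt).const_mul (1 / 2))
  have hν2 : HasDerivAt (fun y => (1 / 2 : ℂ) * (lam + (l1 + y) / 2 + s (l1, y)))
      (1 / 2 * (1 / 2 + d2)) l2 := by
    exact ((((((hasDerivAt_id l2).const_add l1).div_const 2).const_add lam).add
      hds2.hasDerivAt).const_mul (1 / 2))
  -- denominators are nonzero
  have hden1 : ν (l1, l2) - (3 * l1 + l2) / 4 ≠ 0 := by
    intro h
    simp only [ν] at h
    have hSval : S = l1 - lam := by linear_combination 2 * h
    have h2 : (lam - l1) * (l2 - l1) = 0 := by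
      rw [hSval] at hsq0; linear_combination hsq0
    rcases mul_eq_zero.mp h2 with h3 | h3
    · apply hs0
      rw [hSval]
      linear_combination -h3
    · exact hne (sub_eq_zero.mp h3).symm
  have hden2 : ν (l1, l2) - (l1 + 3 * l2) / 4 ≠ 0 := by
    intro h
    simp only [ν] at h
    have hSval : S = l2 - lam := by linear_combination 2 * h
    have h2 : (lam - l2) * (l1 - l2) = 0 := by
      rw [hSval] at hsq0; linear_combination hsq0
    rcases mul_eq_zero.mp h2 with h3 | h3
    · apply hs0
      rw [hSval]
      linear_combination -h3
    · exact hne (sub_eq_zero.mp h3)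
  constructor
  · show deriv (fun x => (1 / 2 : ℂ) * (lam + (x + l2) / 2 + s (x, l2))) l1 = _
    rw [show deriv (fun x => (1 / 2 : ℂ) * (lam + (x + l2) / 2 + s (x, l2))) l1 = 1 / 2 * (1 / 2 + d1) from hν1.deriv, eq_div_iff hden1]
    refine mul_left_cancel₀ hs0 ?_
    simp only [ν, ← hS]
    linear_combination ((lam - l1 + S) / 8) * hkey1 + (1 / 8) * hsq0
  · show deriv (fun y => (1 / 2 : ℂ) * (lam + (l1 + y) / 2 + s (l1, y))) l2 = _
    rw [hν2.deriv, eq_div_iff hden2]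
    refine mul_left_cancel₀ hs0 ?_
    simp only [ν, ← hS]
    linear_combination ((lam - l2 + S) / 8) * hkey2 + (1 / 8) * hsq0
end

section
/- Suppose functions γₘ(λ₁,…,λ_M) and αₘ(λ₁,…,λ_M), m = 1,…,M, are such that for each fixed λ the equations ∂ν/∂λₙ = -αₙ/(ν-γₙ) (n = 1,…,M) for a function ν(λ, λ₁,…,λ_M) are compatible and ν(P_m) = γₘ; then for m ≠ n: ∂γₘ/∂λₙ = αₙ/(γₙ-γₘ) and ∂αₘ/∂λₙ = 2αₙαₘ/(γₙ-γₘ)². -/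
/-- Partial derivative of `f : (Fin M → ℂ) → ℂ` along the `k`-th coordinate at `Λ`. -/
noncomputable def pcoord {M : ℕ} (k : Fin M) (f : (Fin M → ℂ) → ℂ) (Λ : Fin M → ℂ) : ℂ :=
  deriv (fun x => f (Function.update Λ k x)) (Λ k)

lemma pcoord_div {M : ℕ} (γf αf : (Fin M → ℂ) → ℂ) (Λ : Fin M → ℂ) (l : Fin M) (x : ℂ)
    (hγ : DifferentiableAt ℂ (fun y => γf (Function.update Λ l y)) (Λ l))
    (hα : DifferentiableAt ℂ (fun y => αf (Function.update Λ l y)) (Λ l))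
    (hx : x - γf Λ ≠ 0) :
    pcoord l (fun Λ' => -αf Λ' / (x - γf Λ')) Λ
      = (-(pcoord l αf Λ) * (x - γf Λ) - αf Λ * pcoord l γf Λ) / (x - γf Λ) ^ 2 := by
  unfold pcoord
  rw [deriv_fun_div (c := fun y => -αf (Function.update Λ l y))
      (d := fun y => x - γf (Function.update Λ l y)) hα.neg ((differentiableAt_const x).sub hγ)
      (by simpa [Function.update_eq_self] using hx)]
  rw [deriv.fun_neg, deriv_const_sub, Function.update_eq_self]
  ring

lemma deriv_inv_aux (a c x : ℂ) (hx : x - c ≠ 0) :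
    deriv (fun y => -a / (y - c)) x = a / (x - c) ^ 2 := by
  have h1 : HasDerivAt (fun y : ℂ => y - c) 1 x := (hasDerivAt_id x).sub_const c
  have h2 := (hasDerivAt_const x (-a)).fun_div h1 hx
  have h3 : HasDerivAt (fun y => -a / (y - c)) (a / (x - c) ^ 2) x := by
    refine h2.congr_deriv ?_
    ring
  exact h3.deriv

/-- If the equations `∂ν/∂λₙ = -αₙ/(ν-γₙ)`, `n = 1,…,M`, are compatible
(Frobenius compatibility of the right-hand sides, for all values `x` of `ν` avoiding
the points `γⱼ`), then for `m ≠ n`: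
`∂γₘ/∂λₙ = αₙ/(γₙ-γₘ)` and `∂αₘ/∂λₙ = 2αₙαₘ/(γₙ-γₘ)²`. -/
theorem stmt3 {M : ℕ} (γ α : Fin M → (Fin M → ℂ) → ℂ) (Λ : Fin M → ℂ)
    (hdiffγ : ∀ k l : Fin M, DifferentiableAt ℂ (fun x => γ k (Function.update Λ l x)) (Λ l))
    (hdiffα : ∀ k l : Fin M, DifferentiableAt ℂ (fun x => α k (Function.update Λ l x)) (Λ l))
    (hdist : ∀ k l : Fin M, k ≠ l → γ k Λ ≠ γ l Λ)
    (hα : ∀ k, α k Λ ≠ 0)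
    (hcomp : ∀ k l : Fin M, k ≠ l → ∀ x : ℂ, (∀ j, x ≠ γ j Λ) →
      pcoord l (fun Λ' => -α k Λ' / (x - γ k Λ')) Λ
          + (-α l Λ / (x - γ l Λ)) * deriv (fun y => -α k Λ / (y - γ k Λ)) x
        = pcoord k (fun Λ' => -α l Λ' / (x - γ l Λ')) Λ
          + (-α k Λ / (x - γ k Λ)) * deriv (fun y => -α l Λ / (y - γ l Λ)) x)
    (m n : Fin M) (hmn : m ≠ n) :
    pcoord n (γ m) Λ = α n Λ / (γ n Λ - γ m Λ) ∧
    pcoord n (α m) Λ = 2 * α n Λ * α m Λ / (γ n Λ - γ m Λ) ^ 2 := by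
  have ht : γ m Λ - γ n Λ ≠ 0 := sub_ne_zero.mpr (hdist m n hmn)
  have ht' : γ n Λ - γ m Λ ≠ 0 := sub_ne_zero.mpr (hdist n m hmn.symm)
  have key : ∀ x : ℂ, (∀ j, x ≠ γ j Λ) →
      (-(pcoord n (α m) Λ) * (x - γ m Λ) - α m Λ * pcoord n (γ m) Λ) * (x - γ n Λ) ^ 2
        - α n Λ * α m Λ * (x - γ n Λ)
      - ((-(pcoord m (α n) Λ) * (x - γ n Λ) - α n Λ * pcoord m (γ n) Λ) * (x - γ m Λ) ^ 2
        - α m Λ * α n Λ * (x - γ m Λ)) = 0 := by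
    intro x hx
    have hxm : x - γ m Λ ≠ 0 := sub_ne_zero.mpr (hx m)
    have hxn : x - γ n Λ ≠ 0 := sub_ne_zero.mpr (hx n)
    have hc := hcomp m n hmn x hx
    rw [pcoord_div (γ m) (α m) Λ n x (hdiffγ m n) (hdiffα m n) hxm,
        pcoord_div (γ n) (α n) Λ m x (hdiffγ n m) (hdiffα n m) hxn,
        deriv_inv_aux (α m Λ) (γ m Λ) x hxm, deriv_inv_aux (α n Λ) (γ n Λ) x hxn] at hc
    field_simp at hc
    have h3 : (x - γ m Λ) ^ 3 * (x - γ n Λ) ^ 3 *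
        ((-(pcoord n (α m) Λ) * (x - γ m Λ) - α m Λ * pcoord n (γ m) Λ) * (x - γ n Λ) ^ 2
          - α n Λ * α m Λ * (x - γ n Λ)
        - ((-(pcoord m (α n) Λ) * (x - γ n Λ) - α n Λ * pcoord m (γ n) Λ) * (x - γ m Λ) ^ 2
          - α m Λ * α n Λ * (x - γ m Λ))) = 0 := by
      linear_combination (x - γ m Λ) ^ 3 * (x - γ n Λ) ^ 3 * hc
    exact (mul_eq_zero.mp h3).resolve_left (mul_ne_zero (pow_ne_zero 3 hxm) (pow_ne_zero 3 hxn))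
  have hQ : ∀ x : ℂ,
      (-(pcoord n (α m) Λ) * (x - γ m Λ) - α m Λ * pcoord n (γ m) Λ) * (x - γ n Λ) ^ 2
        - α n Λ * α m Λ * (x - γ n Λ)
      - ((-(pcoord m (α n) Λ) * (x - γ n Λ) - α n Λ * pcoord m (γ n) Λ) * (x - γ m Λ) ^ 2
        - α m Λ * α n Λ * (x - γ m Λ)) = 0 := by
    have hdense : Dense {x : ℂ | ∀ j, x ≠ γ j Λ} := by
      have hset : {x : ℂ | ∀ j, x ≠ γ j Λ} = (Set.range fun j => γ j Λ)ᶜ := by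
        ext x
        simp [Set.mem_compl_iff, Set.mem_range, not_exists, eq_comm]
      rw [hset]
      exact ((Set.finite_range _).countable).dense_compl ℂ
    have hcont : Continuous (fun x : ℂ =>
        (-(pcoord n (α m) Λ) * (x - γ m Λ) - α m Λ * pcoord n (γ m) Λ) * (x - γ n Λ) ^ 2
          - α n Λ * α m Λ * (x - γ n Λ)
        - ((-(pcoord m (α n) Λ) * (x - γ n Λ) - α n Λ * pcoord m (γ n) Λ) * (x - γ m Λ) ^ 2
          - α m Λ * α n Λ * (x - γ m Λ))) := by fun_prop
    have heq := hcont.ext_on hdense continuous_const (fun x hx => key x hx)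
    exact fun x => congrFun heq x
  have E0 := hQ (γ m Λ)
  have E1 := hQ (γ n Λ)
  have E2 := hQ (2 * γ m Λ - γ n Λ)
  have E3 := hQ (3 * γ m Λ - 2 * γ n Λ)
  constructor
  · rw [eq_div_iff ht']
    have h1 : α m Λ * ((γ m Λ - γ n Λ) *
        (pcoord n (γ m) Λ * (γ m Λ - γ n Λ) + α n Λ)) = 0 := by
      linear_combination -E0
    have h2 := (mul_eq_zero.mp ((mul_eq_zero.mp h1).resolve_left (hα m))).resolve_left ht
    linear_combination -h2
  · rw [eq_div_iff (pow_ne_zero 2 ht')]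
    have h1 : (6 * (γ m Λ - γ n Λ)) *
        (pcoord n (α m) Λ * (γ m Λ - γ n Λ) ^ 2 - 2 * α n Λ * α m Λ) = 0 := by
      linear_combination 15 * E0 + 2 * E1 - 6 * E2 + E3
    have h2 := (mul_eq_zero.mp h1).resolve_left (by
      simpa using ht)
    linear_combination h2
end

section
/- Let h : [0,1] → ℂ be a continuous function and l a smooth closed contour in ℂ avoiding ξ and ξ̄. Then f(ξ,ξ̄) = ∮_l h(λ) dλ / √((λ-ξ)(λ-ξ̄)) satisfies the Euler–Darboux type equation f_{ξξ̄} - (f_ξ - f_{ξ̄})/(2(ξ-ξ̄)) = 0. -/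
open MeasureTheory Filter Metric intervalIntegral
open scoped Topology Interval

/-- A continuous square root of a differentiable function is differentiable. -/
lemma sqrt_hasDerivAt {u g : ℂ → ℂ} {z₀ d : ℂ} (hu : ContinuousAt u z₀)
    (hg : HasDerivAt g d z₀) (hsq : ∀ᶠ z in 𝓝 z₀, u z ^ 2 = g z) (h0 : u z₀ ≠ 0) :
    HasDerivAt u (d / (2 * u z₀)) z₀ := by
  have hsq0 : u z₀ ^ 2 = g z₀ := hsq.self_of_nhds
  have h2 : (2 : ℂ) * u z₀ ≠ 0 := mul_ne_zero two_ne_zero h0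
  have hadd : Filter.Tendsto (fun z => u z + u z₀) (𝓝 z₀) (𝓝 (2 * u z₀)) := by
    have := hu.tendsto.add (tendsto_const_nhds (x := u z₀))
    rwa [two_mul]
  have hne : ∀ᶠ z in 𝓝 z₀, u z + u z₀ ≠ 0 := hadd.eventually_ne h2
  rw [hasDerivAt_iff_tendsto_slope] at hg ⊢
  have key : ∀ᶠ z in 𝓝[≠] z₀, slope g z₀ z / (u z + u z₀) = slope u z₀ z := by
    filter_upwards [self_mem_nhdsWithin, hsq.filter_mono nhdsWithin_le_nhds,
      hne.filter_mono nhdsWithin_le_nhds] with z hz hsz hnz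
    have hz' : z - z₀ ≠ 0 := sub_ne_zero.2 hz
    have hmul : (u z - u z₀) * (u z + u z₀) = g z - g z₀ := by rw [← hsz, ← hsq0]; ring
    simp only [slope_def_field]
    field_simp
    linear_combination (-1) * hmul
  exact (hg.div (hadd.mono_left nhdsWithin_le_nhds) h2).congr' key

/-- Differentiation under the interval integral, continuity version. -/
lemma hasDerivAt_param (F F' : ℝ → ℂ → ℂ) (x₀ : ℂ) (ε : ℝ) (hε : 0 < ε)
    (hF : ContinuousOn (fun q : ℝ × ℂ => F q.1 q.2) (Set.Icc 0 1 ×ˢ Metric.closedBall x₀ ε))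
    (hF' : ContinuousOn (fun q : ℝ × ℂ => F' q.1 q.2) (Set.Icc 0 1 ×ˢ Metric.closedBall x₀ ε))
    (hd : ∀ t ∈ Set.Icc (0:ℝ) 1, ∀ x ∈ Metric.ball x₀ ε,
      HasDerivAt (fun y => F t y) (F' t x) x) :
    HasDerivAt (fun x => ∫ t in (0:ℝ)..1, F t x) (∫ t in (0:ℝ)..1, F' t x₀) x₀ := by
  have hsub : Ι (0:ℝ) 1 ⊆ Set.Icc 0 1 := by
    rw [Set.uIoc_of_le zero_le_one]; exact Set.Ioc_subset_Icc_self
  have hcball : x₀ ∈ Metric.closedBall x₀ ε := Metric.mem_closedBall_self hε.le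
  obtain ⟨C, hC⟩ :=
    (isCompact_Icc.prod (isCompact_closedBall x₀ ε)).exists_bound_of_continuousOn hF'
  have hmeas : ∀ x ∈ Metric.closedBall x₀ ε,
      AEStronglyMeasurable (fun t => F t x) (volume.restrict (Ι (0:ℝ) 1)) := by
    intro x hx
    have hcont : ContinuousOn (fun t => F t x) (Set.Icc 0 1) :=
      hF.comp ((continuous_id.prodMk continuous_const).continuousOn) (fun t ht => ⟨ht, hx⟩)
    exact ((hcont.mono hsub).aestronglyMeasurable measurableSet_uIoc)
  have key := intervalIntegral.hasDerivAt_integral_of_dominated_loc_of_deriv_le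
    (F := fun x t => F t x) (F' := fun x t => F' t x) (x₀ := x₀) (a := 0) (b := 1)
    (bound := fun _ => C) (Metric.ball_mem_nhds x₀ hε)
    (by
      filter_upwards [Metric.ball_mem_nhds x₀ hε] with x hx
      exact hmeas x (Metric.ball_subset_closedBall hx))
    (by
      apply ContinuousOn.intervalIntegrable
      rw [Set.uIcc_of_le zero_le_one]
      exact hF.comp ((continuous_id.prodMk continuous_const).continuousOn)
        (fun t ht => ⟨ht, hcball⟩))
    (by
      have hcont : ContinuousOn (fun t => F' t x₀) (Set.Icc 0 1) :=
        hF'.comp ((continuous_id.prodMk continuous_const).continuousOn)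
          (fun t ht => ⟨ht, hcball⟩)
      exact (hcont.mono hsub).aestronglyMeasurable measurableSet_uIoc)
    (by
      refine Filter.Eventually.of_forall (fun t ht x hx => ?_)
      exact hC (t, x) ⟨hsub ht, Metric.ball_subset_closedBall hx⟩)
    intervalIntegrable_const
    (by
      refine Filter.Eventually.of_forall (fun t ht x hx => ?_)
      exact hd t (hsub ht) x hx)
  exact key.2

/-- Partial derivative with respect to the first variable. -/
noncomputable def pd1 (f : ℂ × ℂ → ℂ) (p : ℂ × ℂ) : ℂ :=
  deriv (fun x => f (x, p.2)) p.1

/-- Partial derivative with respect to the second variable. -/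
noncomputable def pd2 (f : ℂ × ℂ → ℂ) (p : ℂ × ℂ) : ℂ :=
  deriv (fun y => f (p.1, y)) p.2

/-- For a smooth closed contour `c` (avoiding `ξ, ξ̄`), a continuous
density `h`, and a fixed branch `s(t,(ξ,ξ̄))` of `√((c(t)-ξ)(c(t)-ξ̄))` (continuous in
all variables, nonvanishing, contour and branch independent of `(ξ,ξ̄)`), the function
`f(ξ,ξ̄) = ∮ h(λ) dλ / √((λ-ξ)(λ-ξ̄))` satisfies
`f_{ξξ̄} - (f_ξ - f_{ξ̄})/(2(ξ-ξ̄)) = 0`. -/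
theorem stmt5 (c : ℝ → ℂ) (hc : ContDiff ℝ 1 c) (hclosed : c 1 = c 0)
    (h : ℝ → ℂ) (hh : ContinuousOn h (Set.Icc 0 1))
    (ξ η : ℂ) (hne : ξ ≠ η)
    (U : Set (ℂ × ℂ)) (hU : IsOpen U) (hmem : (ξ, η) ∈ U)
    (s : ℝ → ℂ × ℂ → ℂ)
    (hscont : Continuous fun q : ℝ × (ℂ × ℂ) => s q.1 q.2)
    (hsq : ∀ t ∈ Set.Icc (0:ℝ) 1, ∀ p ∈ U, (s t p) ^ 2 = (c t - p.1) * (c t - p.2))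
    (hs0 : ∀ t ∈ Set.Icc (0:ℝ) 1, ∀ p ∈ U, s t p ≠ 0) :
    let f : ℂ × ℂ → ℂ := fun p => ∫ t in (0:ℝ)..1, h t * deriv c t / s t p
    pd2 (pd1 f) (ξ, η) - (pd1 f (ξ, η) - pd2 f (ξ, η)) / (2 * (ξ - η)) = 0 := by
  intro f
  have hf : ∀ p : ℂ × ℂ, f p = ∫ t in (0:ℝ)..1, h t * deriv c t / s t p := fun _ => rfl
  clear_value f
  obtain ⟨ε, εpos, hballU⟩ := Metric.isOpen_iff.1 hU (ξ, η) hmem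
  set δ := ε / 2 with hδdef
  have δpos : 0 < δ := by positivity
  have hb : ∀ x ∈ Metric.closedBall ξ δ, ∀ y ∈ Metric.closedBall η δ, (x, y) ∈ U := by
    intro x hx y hy
    apply hballU
    rw [Metric.mem_ball, Prod.dist_eq]
    simp only [Metric.mem_closedBall] at hx hy
    calc max (dist x ξ) (dist y η) ≤ δ := max_le hx hy
      _ < ε := by rw [hδdef]; linarith
  have hξδ : ξ ∈ Metric.closedBall ξ δ := Metric.mem_closedBall_self δpos.le
  have hηδ : η ∈ Metric.closedBall η δ := Metric.mem_closedBall_self δpos.le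
  have hc' : Continuous (deriv c) := hc.continuous_deriv le_rfl
  set A : ℝ → ℂ := fun t => h t * deriv c t with hA
  have hAcont : ContinuousOn A (Set.Icc 0 1) := hh.mul hc'.continuousOn
  -- partial derivatives of s
  have hs1 : ∀ t ∈ Set.Icc (0:ℝ) 1, ∀ x y : ℂ, (x, y) ∈ U →
      HasDerivAt (fun x' => s t (x', y)) (-(c t - y) / (2 * s t (x, y))) x := by
    intro t ht x y hxy
    have hcont : ContinuousAt (fun x' => s t (x', y)) x :=
      (hscont.comp (continuous_const.prodMk
        (continuous_id.prodMk continuous_const))).continuousAt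
    have hg : HasDerivAt (fun x' => (c t - x') * (c t - y)) (-(c t - y)) x := by
      simpa using ((hasDerivAt_id x).const_sub (c t)).mul_const (c t - y)
    have hop : IsOpen {x' : ℂ | (x', y) ∈ U} :=
      hU.preimage (continuous_id.prodMk continuous_const)
    have hev : ∀ᶠ x' in 𝓝 x, s t (x', y) ^ 2 = (c t - x') * (c t - y) := by
      filter_upwards [hop.mem_nhds hxy] with x' hx'
      exact hsq t ht (x', y) hx'
    exact sqrt_hasDerivAt hcont hg hev (hs0 t ht (x, y) hxy)
  have hs2 : ∀ t ∈ Set.Icc (0:ℝ) 1, ∀ x y : ℂ, (x, y) ∈ U →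
      HasDerivAt (fun y' => s t (x, y')) (-(c t - x) / (2 * s t (x, y))) y := by
    intro t ht x y hxy
    have hcont : ContinuousAt (fun y' => s t (x, y')) y :=
      (hscont.comp (continuous_const.prodMk
        (continuous_const.prodMk continuous_id))).continuousAt
    have hg : HasDerivAt (fun y' => (c t - x) * (c t - y')) (-(c t - x)) y := by
      have := ((hasDerivAt_id y).const_sub (c t)).const_mul (c t - x)
      simpa [mul_comm] using this
    have hop : IsOpen {y' : ℂ | (x, y') ∈ U} :=
      hU.preimage (continuous_const.prodMk continuous_id)
    have hev : ∀ᶠ y' in 𝓝 y, s t (x, y') ^ 2 = (c t - x) * (c t - y') := by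
      filter_upwards [hop.mem_nhds hxy] with y' hy'
      exact hsq t ht (x, y') hy'
    exact sqrt_hasDerivAt hcont hg hev (hs0 t ht (x, y) hxy)
  -- first partial of f in x, for all y near η
  have derivA : ∀ y ∈ Metric.closedBall η δ,
      HasDerivAt (fun x => f (x, y))
        (∫ t in (0:ℝ)..1, A t * (c t - y) / (2 * (s t (ξ, y)) ^ 3)) ξ := by
    intro y hy
    have hsyc : Continuous (fun q : ℝ × ℂ => s q.1 (q.2, y)) :=
      hscont.comp (continuous_fst.prodMk (continuous_snd.prodMk continuous_const))
    have hsne : ∀ q ∈ Set.Icc (0:ℝ) 1 ×ˢ Metric.closedBall ξ δ, s q.1 (q.2, y) ≠ 0 :=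
      fun q hq => hs0 q.1 hq.1 (q.2, y) (hb q.2 hq.2 y hy)
    have hAq : ContinuousOn (fun q : ℝ × ℂ => A q.1)
        (Set.Icc (0:ℝ) 1 ×ˢ Metric.closedBall ξ δ) :=
      hAcont.comp continuous_fst.continuousOn (fun q hq => hq.1)
    have key := hasDerivAt_param (fun t x => A t / s t (x, y))
      (fun t x => A t * (c t - y) / (2 * (s t (x, y)) ^ 3)) ξ δ δpos
      (hAq.div hsyc.continuousOn hsne)
      (by
        apply ContinuousOn.div
        · exact hAq.mul ((hc.continuous.comp continuous_fst).sub continuous_const).continuousOn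
        · exact (continuous_const.mul (hsyc.pow 3)).continuousOn
        · exact fun q hq => mul_ne_zero two_ne_zero (pow_ne_zero _ (hsne q hq)))
      (by
        intro t ht x hx
        have hxU : (x, y) ∈ U := hb x (Metric.ball_subset_closedBall hx) y hy
        have hd := hs1 t ht x y hxU
        have hnz := hs0 t ht (x, y) hxU
        have := (hasDerivAt_const x (A t)).div hd hnz
        refine this.congr_deriv ?_
        field_simp
        ring)
    simpa only [hf] using key
  -- value of pd1 f on the vertical segment
  have pd1f : ∀ y ∈ Metric.closedBall η δ,
      pd1 f (ξ, y) = ∫ t in (0:ℝ)..1, A t * (c t - y) / (2 * (s t (ξ, y)) ^ 3) := by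
    intro y hy
    exact (derivA y hy).deriv
  -- partial of f in y at (ξ, η)
  have derivB : HasDerivAt (fun y => f (ξ, y))
      (∫ t in (0:ℝ)..1, A t * (c t - ξ) / (2 * (s t (ξ, η)) ^ 3)) η := by
    have hsyc : Continuous (fun q : ℝ × ℂ => s q.1 (ξ, q.2)) :=
      hscont.comp (continuous_fst.prodMk (continuous_const.prodMk continuous_snd))
    have hsne : ∀ q ∈ Set.Icc (0:ℝ) 1 ×ˢ Metric.closedBall η δ, s q.1 (ξ, q.2) ≠ 0 :=
      fun q hq => hs0 q.1 hq.1 (ξ, q.2) (hb ξ hξδ q.2 hq.2)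
    have hAq : ContinuousOn (fun q : ℝ × ℂ => A q.1)
        (Set.Icc (0:ℝ) 1 ×ˢ Metric.closedBall η δ) :=
      hAcont.comp continuous_fst.continuousOn (fun q hq => hq.1)
    have key := hasDerivAt_param (fun t y => A t / s t (ξ, y))
      (fun t y => A t * (c t - ξ) / (2 * (s t (ξ, y)) ^ 3)) η δ δpos
      (hAq.div hsyc.continuousOn hsne)
      (by
        apply ContinuousOn.div
        · exact hAq.mul ((hc.continuous.comp continuous_fst).sub continuous_const).continuousOn
        · exact (continuous_const.mul (hsyc.pow 3)).continuousOn
        · exact fun q hq => mul_ne_zero two_ne_zero (pow_ne_zero _ (hsne q hq)))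
      (by
        intro t ht y hy
        have hyU : (ξ, y) ∈ U := hb ξ hξδ y (Metric.ball_subset_closedBall hy)
        have hd := hs2 t ht ξ y hyU
        have hnz := hs0 t ht (ξ, y) hyU
        have := (hasDerivAt_const y (A t)).div hd hnz
        refine this.congr_deriv ?_
        field_simp
        ring)
    simpa only [hf] using key
  -- second derivative: differentiate pd1 f (ξ, ·)
  have derivC : HasDerivAt
      (fun y => ∫ t in (0:ℝ)..1, A t * (c t - y) / (2 * (s t (ξ, y)) ^ 3))
      (∫ t in (0:ℝ)..1,
        A t * (3 * (c t - ξ) * (c t - η) - 2 * (s t (ξ, η)) ^ 2) / (4 * (s t (ξ, η)) ^ 5)) η := by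
    have hsyc : Continuous (fun q : ℝ × ℂ => s q.1 (ξ, q.2)) :=
      hscont.comp (continuous_fst.prodMk (continuous_const.prodMk continuous_snd))
    have hsne : ∀ q ∈ Set.Icc (0:ℝ) 1 ×ˢ Metric.closedBall η δ, s q.1 (ξ, q.2) ≠ 0 :=
      fun q hq => hs0 q.1 hq.1 (ξ, q.2) (hb ξ hξδ q.2 hq.2)
    have hAq : ContinuousOn (fun q : ℝ × ℂ => A q.1)
        (Set.Icc (0:ℝ) 1 ×ˢ Metric.closedBall η δ) :=
      hAcont.comp continuous_fst.continuousOn (fun q hq => hq.1)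
    have hcq : Continuous (fun q : ℝ × ℂ => c q.1) := hc.continuous.comp continuous_fst
    exact hasDerivAt_param (fun t y => A t * (c t - y) / (2 * (s t (ξ, y)) ^ 3))
      (fun t y => A t * (3 * (c t - ξ) * (c t - y) - 2 * (s t (ξ, y)) ^ 2)
        / (4 * (s t (ξ, y)) ^ 5)) η δ δpos
      (by
        apply ContinuousOn.div
        · exact hAq.mul (hcq.sub continuous_snd).continuousOn
        · exact (continuous_const.mul (hsyc.pow 3)).continuousOn
        · exact fun q hq => mul_ne_zero two_ne_zero (pow_ne_zero _ (hsne q hq)))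
      (by
        apply ContinuousOn.div
        · exact hAq.mul (((continuous_const.mul (hcq.sub continuous_const)).mul
            (hcq.sub continuous_snd)).sub (continuous_const.mul (hsyc.pow 2))).continuousOn
        · exact (continuous_const.mul (hsyc.pow 5)).continuousOn
        · exact fun q hq => mul_ne_zero (by norm_num) (pow_ne_zero _ (hsne q hq)))
      (by
        intro t ht y hy
        have hyU : (ξ, y) ∈ U := hb ξ hξδ y (Metric.ball_subset_closedBall hy)
        have hd := hs2 t ht ξ y hyU
        have hnz := hs0 t ht (ξ, y) hyU
        have hnum : HasDerivAt (fun y' => A t * (c t - y')) (-(A t)) y := by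
          have := ((hasDerivAt_id y).const_sub (c t)).const_mul (A t)
          simpa using this
        have hden : HasDerivAt (fun y' => 2 * (s t (ξ, y')) ^ 3)
            (2 * ((3 : ℂ) * (s t (ξ, y)) ^ 2 * (-(c t - ξ) / (2 * s t (ξ, y))))) y := by
          have hp := hd.pow 3
          have := hp.const_mul (2 : ℂ)
          refine this.congr_deriv ?_
          norm_num
        have := hnum.div hden (mul_ne_zero two_ne_zero (pow_ne_zero _ hnz))
        refine this.congr_deriv ?_
        field_simp
        ring)
  -- assemble the three derivative formulas
  have hpd1 : pd1 f (ξ, η) = ∫ t in (0:ℝ)..1, A t * (c t - η) / (2 * (s t (ξ, η)) ^ 3) :=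
    pd1f η hηδ
  have hpd2 : pd2 f (ξ, η) = ∫ t in (0:ℝ)..1, A t * (c t - ξ) / (2 * (s t (ξ, η)) ^ 3) :=
    derivB.deriv
  have hpd21 : pd2 (pd1 f) (ξ, η) = ∫ t in (0:ℝ)..1,
      A t * (3 * (c t - ξ) * (c t - η) - 2 * (s t (ξ, η)) ^ 2) / (4 * (s t (ξ, η)) ^ 5) := by
    have hev : (fun y => pd1 f (ξ, y)) =ᶠ[𝓝 η]
        (fun y => ∫ t in (0:ℝ)..1, A t * (c t - y) / (2 * (s t (ξ, y)) ^ 3)) := by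
      filter_upwards [Metric.closedBall_mem_nhds η δpos] with y hy
      exact pd1f y hy
    show deriv (fun y => pd1 f (ξ, y)) η = _
    rw [hev.deriv_eq]
    exact derivC.deriv
  rw [hpd1, hpd2, hpd21]
  -- combine the integrals
  have hsp : Continuous (fun t => s t (ξ, η)) :=
    hscont.comp (continuous_id.prodMk continuous_const)
  have hspne : ∀ t ∈ Set.uIcc (0:ℝ) 1, s t (ξ, η) ≠ 0 := by
    intro t ht
    rw [Set.uIcc_of_le zero_le_one] at ht
    exact hs0 t ht (ξ, η) hmem
  have hint : ∀ w : ℂ, IntervalIntegrable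
      (fun t => A t * (c t - w) / (2 * (s t (ξ, η)) ^ 3)) volume 0 1 := by
    intro w
    apply ContinuousOn.intervalIntegrable
    apply ContinuousOn.div
    · exact (hAcont.mono (by rw [Set.uIcc_of_le zero_le_one])).mul
        (hc.continuous.sub continuous_const).continuousOn
    · exact (continuous_const.mul (hsp.pow 3)).continuousOn
    · exact fun t ht => mul_ne_zero two_ne_zero (pow_ne_zero _ (hspne t ht))
  rw [← intervalIntegral.integral_sub (hint η) (hint ξ), ← intervalIntegral.integral_div,
    ← intervalIntegral.integral_sub]
  · rw [show (0:ℂ) = ∫ _t in (0:ℝ)..1, (0:ℂ) by simp]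
    apply intervalIntegral.integral_congr
    intro t ht
    have ht' : t ∈ Set.Icc (0:ℝ) 1 := by rwa [Set.uIcc_of_le zero_le_one] at ht
    have e := hsq t ht' (ξ, η) hmem
    have n0 := hs0 t ht' (ξ, η) hmem
    have hξη : ξ - η ≠ 0 := sub_ne_zero.2 hne
    field_simp
    ring_nf
    linear_combination (-12 * A t * (ξ - η)) * e
  · apply ContinuousOn.intervalIntegrable
    apply ContinuousOn.div
    · exact (hAcont.mono (by rw [Set.uIcc_of_le zero_le_one])).mul
        (((continuous_const.mul (hc.continuous.sub continuous_const)).mul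
          (hc.continuous.sub continuous_const)).sub
          (continuous_const.mul (hsp.pow 2))).continuousOn
    · exact (continuous_const.mul (hsp.pow 5)).continuousOn
    · exact fun t ht => mul_ne_zero (by norm_num) (pow_ne_zero _ (hspne t ht))
  · exact ((hint η).sub (hint ξ)).div_const _
end

section
/- Suppose G(ξ,ξ̄) is a smooth invertible r×r complex matrix-valued function satisfying the Ernst equation ((ξ-ξ̄)G_ξ G⁻¹)_{ξ̄} + ((ξ-ξ̄)G_{ξ̄} G⁻¹)_ξ = 0. Then the 1-form q = ((ξ-ξ̄)/4) tr(G_ξ G⁻¹)² dξ + ((ξ̄-ξ)/4) tr(G_{ξ̄} G⁻¹)² dξ̄ is closed, i.e. ∂_{ξ̄}[((ξ-ξ̄)/4) tr(G_ξ G⁻¹)²] = ∂_ξ[((ξ̄-ξ)/4) tr(G_{ξ̄} G⁻¹)²]. -/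
/-- Entrywise partial derivative of a matrix-valued function, first variable. -/
noncomputable def pdM1 {r : ℕ} (G : ℂ × ℂ → Matrix (Fin r) (Fin r) ℂ) (p : ℂ × ℂ) :
    Matrix (Fin r) (Fin r) ℂ :=
  Matrix.of fun i j => pd1 (fun q => G q i j) p

/-- Entrywise partial derivative of a matrix-valued function, second variable. -/
noncomputable def pdM2 {r : ℕ} (G : ℂ × ℂ → Matrix (Fin r) (Fin r) ℂ) (p : ℂ × ℂ) :
    Matrix (Fin r) (Fin r) ℂ :=
  Matrix.of fun i j => pd2 (fun q => G q i j) p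

open Matrix Finset

namespace Stmt7Aux

/-- fderiv-based first partial. -/
noncomputable def d1 (f : ℂ × ℂ → ℂ) : ℂ × ℂ → ℂ := fun q => fderiv ℂ f q (1, 0)

/-- fderiv-based second partial. -/
noncomputable def d2 (f : ℂ × ℂ → ℂ) : ℂ × ℂ → ℂ := fun q => fderiv ℂ f q (0, 1)

lemma diff1 {f : ℂ × ℂ → ℂ} {a b : ℂ} (hf : DifferentiableAt ℂ f (a, b)) :
    DifferentiableAt ℂ (fun x => f (x, b)) a :=
  hf.comp a (differentiableAt_id.prodMk (differentiableAt_const b))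

lemma diff2 {f : ℂ × ℂ → ℂ} {a b : ℂ} (hf : DifferentiableAt ℂ f (a, b)) :
    DifferentiableAt ℂ (fun y => f (a, y)) b :=
  hf.comp b ((differentiableAt_const a).prodMk differentiableAt_id)

lemma pd1_eq_fderiv {f : ℂ × ℂ → ℂ} {a b : ℂ} (hf : DifferentiableAt ℂ f (a, b)) :
    pd1 f (a, b) = fderiv ℂ f (a, b) (1, 0) :=
  (hf.hasFDerivAt.comp_hasDerivAt a ((hasDerivAt_id a).prodMk (hasDerivAt_const a b))).deriv

lemma pd2_eq_fderiv {f : ℂ × ℂ → ℂ} {a b : ℂ} (hf : DifferentiableAt ℂ f (a, b)) :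
    pd2 f (a, b) = fderiv ℂ f (a, b) (0, 1) :=
  (hf.hasFDerivAt.comp_hasDerivAt b ((hasDerivAt_const b a).prodMk (hasDerivAt_id b))).deriv

lemma pd1_eq_d1 {f : ℂ × ℂ → ℂ} (hf : Differentiable ℂ f) (q : ℂ × ℂ) :
    pd1 f q = d1 f q := by
  obtain ⟨a, b⟩ := q
  exact pd1_eq_fderiv (hf _)

lemma pd2_eq_d2 {f : ℂ × ℂ → ℂ} (hf : Differentiable ℂ f) (q : ℂ × ℂ) :
    pd2 f q = d2 f q := by
  obtain ⟨a, b⟩ := q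
  exact pd2_eq_fderiv (hf _)

lemma contDiff_d1 {f : ℂ × ℂ → ℂ} (hf : ContDiff ℂ 2 f) : ContDiff ℂ 1 (d1 f) :=
  (hf.fderiv_right (by norm_num)).clm_apply contDiff_const

lemma contDiff_d2 {f : ℂ × ℂ → ℂ} (hf : ContDiff ℂ 2 f) : ContDiff ℂ 1 (d2 f) :=
  (hf.fderiv_right (by norm_num)).clm_apply contDiff_const

lemma clairaut {f : ℂ × ℂ → ℂ} (hf : ContDiff ℂ 2 f) (p : ℂ × ℂ) :
    pd1 (d2 f) p = pd2 (d1 f) p := by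
  obtain ⟨a, b⟩ := p
  have hd : Differentiable ℂ (fderiv ℂ f) :=
    (hf.fderiv_right (m := 1) (by norm_num)).differentiable one_ne_zero
  rw [pd1_eq_fderiv (((contDiff_d2 hf).differentiable one_ne_zero) _),
    pd2_eq_fderiv (((contDiff_d1 hf).differentiable one_ne_zero) _)]
  have key : ∀ v w : ℂ × ℂ,
      fderiv ℂ (fun q => fderiv ℂ f q v) (a, b) w
        = fderiv ℂ (fderiv ℂ f) (a, b) w v := by
    intro v w
    rw [fderiv_clm_apply (hd _) (differentiableAt_const v)]
    simp
  show fderiv ℂ (fun q => fderiv ℂ f q (0, 1)) (a, b) (1, 0)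
      = fderiv ℂ (fun q => fderiv ℂ f q (1, 0)) (a, b) (0, 1)
  rw [key, key]
  exact (hf.contDiffAt.isSymmSndFDerivAt (by simp)).eq _ _

lemma pd1_mul {f g : ℂ × ℂ → ℂ} {a b : ℂ} (hf : DifferentiableAt ℂ f (a, b))
    (hg : DifferentiableAt ℂ g (a, b)) :
    pd1 (fun q => f q * g q) (a, b) = pd1 f (a, b) * g (a, b) + f (a, b) * pd1 g (a, b) :=
  deriv_mul (diff1 hf) (diff1 hg)

lemma pd2_mul {f g : ℂ × ℂ → ℂ} {a b : ℂ} (hf : DifferentiableAt ℂ f (a, b))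
    (hg : DifferentiableAt ℂ g (a, b)) :
    pd2 (fun q => f q * g q) (a, b) = pd2 f (a, b) * g (a, b) + f (a, b) * pd2 g (a, b) :=
  deriv_mul (diff2 hf) (diff2 hg)

lemma pd1_sum {ι : Type*} {s : Finset ι} {f : ι → ℂ × ℂ → ℂ} {a b : ℂ}
    (h : ∀ i ∈ s, DifferentiableAt ℂ (f i) (a, b)) :
    pd1 (fun q => ∑ i ∈ s, f i q) (a, b) = ∑ i ∈ s, pd1 (f i) (a, b) :=
  deriv_fun_sum (fun i hi => diff1 (h i hi))

lemma pd2_sum {ι : Type*} {s : Finset ι} {f : ι → ℂ × ℂ → ℂ} {a b : ℂ}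
    (h : ∀ i ∈ s, DifferentiableAt ℂ (f i) (a, b)) :
    pd2 (fun q => ∑ i ∈ s, f i q) (a, b) = ∑ i ∈ s, pd2 (f i) (a, b) :=
  deriv_fun_sum (fun i hi => diff2 (h i hi))

lemma pd1_fst_sub_snd (a b : ℂ) : pd1 (fun q : ℂ × ℂ => q.1 - q.2) (a, b) = 1 := by
  have : HasDerivAt (fun x : ℂ => x - b) 1 a := by
    simpa using (hasDerivAt_id' (x := a)).fun_sub (hasDerivAt_const a b)
  exact this.deriv

lemma pd2_fst_sub_snd (a b : ℂ) : pd2 (fun q : ℂ × ℂ => q.1 - q.2) (a, b) = -1 := by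
  have : HasDerivAt (fun y : ℂ => a - y) (-1) b := by
    simpa using (hasDerivAt_const b a).fun_sub (hasDerivAt_id' (x := b))
  exact this.deriv

lemma pd1_c4 (a b : ℂ) : pd1 (fun q : ℂ × ℂ => (q.2 - q.1) / 4) (a, b) = -(1/4) := by
  have h : HasDerivAt (fun x : ℂ => (b - x) / 4) ((0 - 1) / 4) a :=
    ((hasDerivAt_const a b).sub (hasDerivAt_id a)).div_const 4
  have h2 := h.deriv
  rw [show ((0 : ℂ) - 1) / 4 = -(1/4) by norm_num] at h2
  exact h2

lemma pd2_c4 (a b : ℂ) : pd2 (fun q : ℂ × ℂ => (q.1 - q.2) / 4) (a, b) = -(1/4) := by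
  have h : HasDerivAt (fun y : ℂ => (a - y) / 4) ((0 - 1) / 4) b :=
    ((hasDerivAt_const b a).sub (hasDerivAt_id b)).div_const 4
  have h2 := h.deriv
  rw [show ((0 : ℂ) - 1) / 4 = -(1/4) by norm_num] at h2
  exact h2

lemma diff_det {r : ℕ} {F : ℂ × ℂ → Matrix (Fin r) (Fin r) ℂ} {q : ℂ × ℂ}
    (h : ∀ i j, DifferentiableAt ℂ (fun q' => F q' i j) q) :
    DifferentiableAt ℂ (fun q' => (F q').det) q := by
  simp only [Matrix.det_apply']
  apply DifferentiableAt.fun_sum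
  intro σ _
  apply DifferentiableAt.const_mul
  exact (HasFDerivAt.finset_prod (fun i _ => (h (σ i) i).hasFDerivAt)).differentiableAt

lemma pdM1_apply {r : ℕ} (F : ℂ × ℂ → Matrix (Fin r) (Fin r) ℂ) (p : ℂ × ℂ) (i j : Fin r) :
    pdM1 F p i j = pd1 (fun q => F q i j) p := rfl

lemma pdM2_apply {r : ℕ} (F : ℂ × ℂ → Matrix (Fin r) (Fin r) ℂ) (p : ℂ × ℂ) (i j : Fin r) :
    pdM2 F p i j = pd2 (fun q => F q i j) p := rfl

lemma pdM1_mul {r : ℕ} {F1 F2 : ℂ × ℂ → Matrix (Fin r) (Fin r) ℂ} {a b : ℂ}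
    (h1 : ∀ i j, DifferentiableAt ℂ (fun q => F1 q i j) (a, b))
    (h2 : ∀ i j, DifferentiableAt ℂ (fun q => F2 q i j) (a, b)) :
    pdM1 (fun q => F1 q * F2 q) (a, b)
      = pdM1 F1 (a, b) * F2 (a, b) + F1 (a, b) * pdM1 F2 (a, b) := by
  ext i j
  rw [pdM1_apply]
  have hfun : (fun q => (F1 q * F2 q) i j) = fun q => ∑ k, F1 q i k * F2 q k j :=
    funext fun q => Matrix.mul_apply
  rw [hfun, pd1_sum (fun k _ => ((h1 i k).fun_mul (h2 k j)))]
  simp only [Matrix.add_apply, Matrix.mul_apply, pdM1_apply]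
  rw [← Finset.sum_add_distrib]
  exact Finset.sum_congr rfl fun k _ => pd1_mul (h1 i k) (h2 k j)

lemma pdM2_mul {r : ℕ} {F1 F2 : ℂ × ℂ → Matrix (Fin r) (Fin r) ℂ} {a b : ℂ}
    (h1 : ∀ i j, DifferentiableAt ℂ (fun q => F1 q i j) (a, b))
    (h2 : ∀ i j, DifferentiableAt ℂ (fun q => F2 q i j) (a, b)) :
    pdM2 (fun q => F1 q * F2 q) (a, b)
      = pdM2 F1 (a, b) * F2 (a, b) + F1 (a, b) * pdM2 F2 (a, b) := by
  ext i j
  rw [pdM2_apply]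
  have hfun : (fun q => (F1 q * F2 q) i j) = fun q => ∑ k, F1 q i k * F2 q k j :=
    funext fun q => Matrix.mul_apply
  rw [hfun, pd2_sum (fun k _ => ((h1 i k).fun_mul (h2 k j)))]
  simp only [Matrix.add_apply, Matrix.mul_apply, pdM2_apply]
  rw [← Finset.sum_add_distrib]
  exact Finset.sum_congr rfl fun k _ => pd2_mul (h1 i k) (h2 k j)

lemma pdM1_smulfn {r : ℕ} {c : ℂ × ℂ → ℂ} {F : ℂ × ℂ → Matrix (Fin r) (Fin r) ℂ} {a b : ℂ}
    (hc : DifferentiableAt ℂ c (a, b))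
    (hF : ∀ i j, DifferentiableAt ℂ (fun q => F q i j) (a, b)) :
    pdM1 (fun q => c q • F q) (a, b)
      = pd1 c (a, b) • F (a, b) + c (a, b) • pdM1 F (a, b) := by
  ext i j
  rw [pdM1_apply]
  have hfun : (fun q => (c q • F q) i j) = fun q => c q * F q i j :=
    funext fun q => rfl
  rw [hfun, pd1_mul hc (hF i j)]
  simp [pdM1_apply, smul_eq_mul]

lemma pdM2_smulfn {r : ℕ} {c : ℂ × ℂ → ℂ} {F : ℂ × ℂ → Matrix (Fin r) (Fin r) ℂ} {a b : ℂ}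
    (hc : DifferentiableAt ℂ c (a, b))
    (hF : ∀ i j, DifferentiableAt ℂ (fun q => F q i j) (a, b)) :
    pdM2 (fun q => c q • F q) (a, b)
      = pd2 c (a, b) • F (a, b) + c (a, b) • pdM2 F (a, b) := by
  ext i j
  rw [pdM2_apply]
  have hfun : (fun q => (c q • F q) i j) = fun q => c q * F q i j :=
    funext fun q => rfl
  rw [hfun, pd2_mul hc (hF i j)]
  simp [pdM2_apply, smul_eq_mul]

lemma pdM1_const {r : ℕ} (C : Matrix (Fin r) (Fin r) ℂ) (p : ℂ × ℂ) :
    pdM1 (fun _ => C) p = 0 := by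
  ext i j
  rw [pdM1_apply]
  exact deriv_const _ _

lemma pdM2_const {r : ℕ} (C : Matrix (Fin r) (Fin r) ℂ) (p : ℂ × ℂ) :
    pdM2 (fun _ => C) p = 0 := by
  ext i j
  rw [pdM2_apply]
  exact deriv_const _ _

lemma trace_form {r : ℕ} (X Y : Matrix (Fin r) (Fin r) ℂ) :
    ∑ i, ∑ j, X i j * Y j i = Matrix.trace (X * Y) := by
  simp [Matrix.trace, Matrix.diag, Matrix.mul_apply]

end Stmt7Aux

open Stmt7Aux

/-- If the smooth invertible matrix function `G(ξ,ξ̄)` satisfies the Ernst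
equation `((ξ-ξ̄)G_ξG⁻¹)_{ξ̄} + ((ξ-ξ̄)G_{ξ̄}G⁻¹)_ξ = 0`, then the 1-form
`q = ((ξ-ξ̄)/4)tr(G_ξG⁻¹)² dξ + ((ξ̄-ξ)/4)tr(G_{ξ̄}G⁻¹)² dξ̄` is closed. -/
theorem stmt7 {r : ℕ} (G : ℂ × ℂ → Matrix (Fin r) (Fin r) ℂ)
    (hsm : ∀ i j, ContDiff ℂ 2 fun q => G q i j)
    (hinv : ∀ q, IsUnit (G q))
    (hErnst : ∀ q : ℂ × ℂ,
      pdM2 (fun q' => (q'.1 - q'.2) • (pdM1 G q' * (G q')⁻¹)) q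
        + pdM1 (fun q' => (q'.1 - q'.2) • (pdM2 G q' * (G q')⁻¹)) q = 0)
    (p : ℂ × ℂ) (hp : p.1 ≠ p.2) :
    pd2 (fun q => (q.1 - q.2) / 4 * Matrix.trace ((pdM1 G q * (G q)⁻¹) ^ 2)) p
      = pd1 (fun q => (q.2 - q.1) / 4 * Matrix.trace ((pdM2 G q * (G q)⁻¹) ^ 2)) p := by
  clear hp
  obtain ⟨a, b⟩ := p
  -- basic differentiability facts
  have hGd : ∀ i j, Differentiable ℂ (fun q => G q i j) := fun i j =>
    (hsm i j).differentiable (by norm_num)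
  have hg1d : ∀ i j, Differentiable ℂ (d1 fun q => G q i j) := fun i j =>
    (contDiff_d1 (hsm i j)).differentiable one_ne_zero
  have hg2d : ∀ i j, Differentiable ℂ (d2 fun q => G q i j) := fun i j =>
    (contDiff_d2 (hsm i j)).differentiable one_ne_zero
  have hdetne : ∀ q : ℂ × ℂ, (G q).det ≠ 0 := fun q =>
    ((Matrix.isUnit_iff_isUnit_det _).mp (hinv q)).ne_zero
  have hdet : Differentiable ℂ (fun q => (G q).det) := fun q =>
    diff_det (fun i j => (hGd i j) q)
  have hadj : ∀ i j, Differentiable ℂ (fun q => (G q).adjugate i j) := by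
    intro i j q
    have hfun : (fun q => (G q).adjugate i j)
        = fun q => ((G q).updateRow j (Pi.single i 1)).det :=
      funext fun q => Matrix.adjugate_apply _ _ _
    rw [hfun]
    apply diff_det
    intro k l
    by_cases hk : k = j
    · have hconst : (fun q' : ℂ × ℂ => ((G q').updateRow j (Pi.single i 1)) k l)
          = fun _ : ℂ × ℂ => (Pi.single i (1 : ℂ) : Fin r → ℂ) l := by
        funext q'
        simp [Matrix.updateRow_apply, hk]
      rw [hconst]
      exact differentiableAt_const _
    · have h2 : (fun q' : ℂ × ℂ => ((G q').updateRow j (Pi.single i 1)) k l)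
          = fun q' => G q' k l := by
        funext q'
        simp [Matrix.updateRow_apply, hk]
      rw [h2]
      exact (hGd k l) q
  have hHd : ∀ i j, Differentiable ℂ (fun q => (G q)⁻¹ i j) := by
    intro i j
    have hfun : (fun q => (G q)⁻¹ i j) = fun q => ((G q).det)⁻¹ * (G q).adjugate i j := by
      funext q
      rw [Matrix.inv_def]
      simp [Ring.inverse_eq_inv', Matrix.smul_apply, smul_eq_mul]
    rw [hfun]
    exact (hdet.inv hdetne).mul (hadj i j)
  -- d1/d2 matrix form of pdM1 G, pdM2 G
  have hpdM1Gq : ∀ q, pdM1 G q = Matrix.of (fun i k => d1 (fun q' => G q' i k) q) := by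
    intro q; ext i k; exact pd1_eq_d1 (hGd i k) q
  have hpdM2Gq : ∀ q, pdM2 G q = Matrix.of (fun i k => d2 (fun q' => G q' i k) q) := by
    intro q; ext i k; exact pd2_eq_d2 (hGd i k) q
  -- abbreviations at the base point
  set H : Matrix (Fin r) (Fin r) ℂ := (G (a, b))⁻¹ with hHdef
  set G1 : Matrix (Fin r) (Fin r) ℂ := pdM1 G (a, b) with hG1def
  set G2 : Matrix (Fin r) (Fin r) ℂ := pdM2 G (a, b) with hG2def
  set A : Matrix (Fin r) (Fin r) ℂ := G1 * H with hAdef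
  set B : Matrix (Fin r) (Fin r) ℂ := G2 * H with hBdef
  set Hd1 : Matrix (Fin r) (Fin r) ℂ := pdM1 (fun q => (G q)⁻¹) (a, b) with hHd1def
  set Hd2 : Matrix (Fin r) (Fin r) ℂ := pdM2 (fun q => (G q)⁻¹) (a, b) with hHd2def
  set M : Matrix (Fin r) (Fin r) ℂ :=
    Matrix.of (fun i k => pd2 (d1 fun q' => G q' i k) (a, b)) with hMdef
  set FA : ℂ × ℂ → Matrix (Fin r) (Fin r) ℂ :=
    fun q => Matrix.of (fun i k => d1 (fun q' => G q' i k) q) * (G q)⁻¹ with hFAdef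
  set FB : ℂ × ℂ → Matrix (Fin r) (Fin r) ℂ :=
    fun q => Matrix.of (fun i k => d2 (fun q' => G q' i k) q) * (G q)⁻¹ with hFBdef
  have hFAq : ∀ q, pdM1 G q * (G q)⁻¹ = FA q := by
    intro q; rw [hpdM1Gq q, hFAdef]
  have hFBq : ∀ q, pdM2 G q * (G q)⁻¹ = FB q := by
    intro q; rw [hpdM2Gq q, hFBdef]
  have hG1d1 : G1 = Matrix.of (fun i k => d1 (fun q' => G q' i k) (a, b)) := by
    rw [hG1def, hpdM1Gq]
  have hG2d2 : G2 = Matrix.of (fun i k => d2 (fun q' => G q' i k) (a, b)) := by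
    rw [hG2def, hpdM2Gq]
  have hFAab : FA (a, b) = A := by rw [hFAdef, hAdef, hG1d1, hHdef]
  have hFBab : FB (a, b) = B := by rw [hFBdef, hBdef, hG2d2, hHdef]
  -- differentiability of FA, FB entries
  have hFAd : ∀ i j, Differentiable ℂ (fun q => FA q i j) := by
    intro i j
    have hfun : (fun q => FA q i j)
        = fun q => ∑ k, d1 (fun q' => G q' i k) q * (G q)⁻¹ k j :=
      funext fun q => Matrix.mul_apply
    rw [hfun]
    exact Differentiable.fun_sum (fun k _ => (hg1d i k).mul (hHd k j))
  have hFBd : ∀ i j, Differentiable ℂ (fun q => FB q i j) := by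
    intro i j
    have hfun : (fun q => FB q i j)
        = fun q => ∑ k, d2 (fun q' => G q' i k) q * (G q)⁻¹ k j :=
      funext fun q => Matrix.mul_apply
    rw [hfun]
    exact Differentiable.fun_sum (fun k _ => (hg2d i k).mul (hHd k j))
  -- derivatives of FA, FB at (a,b)
  have hpdM2FA : pdM2 FA (a, b) = M * H + G1 * Hd2 := by
    rw [hFAdef]
    rw [pdM2_mul (F1 := fun q => (Matrix.of fun i k => d1 (fun q' => G q' i k) q))
      (F2 := fun q => (G q)⁻¹) (fun i j => (hg1d i j) (a, b)) (fun i j => (hHd i j) (a, b))]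
    rw [show pdM2 (fun q => (Matrix.of (fun i k => d1 (fun q' => G q' i k) q) :
        Matrix (Fin r) (Fin r) ℂ)) (a, b) = M from rfl]
    rw [← hG1d1]
  have hpdM1FB : pdM1 FB (a, b) = M * H + G2 * Hd1 := by
    rw [hFBdef]
    rw [pdM1_mul (F1 := fun q => (Matrix.of fun i k => d2 (fun q' => G q' i k) q))
      (F2 := fun q => (G q)⁻¹) (fun i j => (hg2d i j) (a, b)) (fun i j => (hHd i j) (a, b))]
    have hMalt : pdM1 (fun q => (Matrix.of (fun i k => d2 (fun q' => G q' i k) q) :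
        Matrix (Fin r) (Fin r) ℂ)) (a, b) = M := by
      ext i k
      rw [pdM1_apply]
      exact clairaut (hsm i k) (a, b)
    rw [hMalt, ← hG2d2]
  -- inverse identities
  have hHG1 : H * G (a, b) = 1 :=
    Matrix.nonsing_inv_mul _ ((Matrix.isUnit_iff_isUnit_det _).mp (hinv _))
  have hGHfun : (fun q : ℂ × ℂ => G q * (G q)⁻¹)
      = fun _ => (1 : Matrix (Fin r) (Fin r) ℂ) :=
    funext fun q => Matrix.mul_nonsing_inv _ ((Matrix.isUnit_iff_isUnit_det _).mp (hinv q))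
  have hd1inv : Hd1 = -(H * (G1 * H)) := by
    have h0 : pdM1 (fun q => G q * (G q)⁻¹) (a, b) = G1 * H + G (a, b) * Hd1 := by
      rw [pdM1_mul (F1 := G) (F2 := fun q => (G q)⁻¹)
        (fun i j => (hGd i j) (a, b)) (fun i j => (hHd i j) (a, b))]
    rw [hGHfun, pdM1_const] at h0
    have h1 : G (a, b) * Hd1 = -(G1 * H) := eq_neg_of_add_eq_zero_right h0.symm
    calc Hd1 = (H * G (a, b)) * Hd1 := by rw [hHG1, one_mul]
      _ = H * (G (a, b) * Hd1) := by rw [Matrix.mul_assoc]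
      _ = H * -(G1 * H) := by rw [h1]
      _ = -(H * (G1 * H)) := by rw [Matrix.mul_neg]
  have hd2inv : Hd2 = -(H * (G2 * H)) := by
    have h0 : pdM2 (fun q => G q * (G q)⁻¹) (a, b) = G2 * H + G (a, b) * Hd2 := by
      rw [pdM2_mul (F1 := G) (F2 := fun q => (G q)⁻¹)
        (fun i j => (hGd i j) (a, b)) (fun i j => (hHd i j) (a, b))]
    rw [hGHfun, pdM2_const] at h0
    have h1 : G (a, b) * Hd2 = -(G2 * H) := eq_neg_of_add_eq_zero_right h0.symm
    calc Hd2 = (H * G (a, b)) * Hd2 := by rw [hHG1, one_mul]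
      _ = H * (G (a, b) * Hd2) := by rw [Matrix.mul_assoc]
      _ = H * -(G2 * H) := by rw [h1]
      _ = -(H * (G2 * H)) := by rw [Matrix.mul_neg]
  have hG1Hd2 : G1 * Hd2 = -(A * B) := by
    rw [hd2inv, Matrix.mul_neg, ← Matrix.mul_assoc, hAdef, hBdef, Matrix.mul_assoc]
  have hG2Hd1 : G2 * Hd1 = -(B * A) := by
    rw [hd1inv, Matrix.mul_neg, ← Matrix.mul_assoc, hAdef, hBdef, Matrix.mul_assoc]
  -- coefficient function differentiability
  have hcd : Differentiable ℂ (fun q : ℂ × ℂ => q.1 - q.2) :=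
    differentiable_fst.sub differentiable_snd
  -- Ernst equation at (a,b)
  have hE := hErnst (a, b)
  have e1fun : (fun q' : ℂ × ℂ => (q'.1 - q'.2) • (pdM1 G q' * (G q')⁻¹))
      = fun q' => (q'.1 - q'.2) • FA q' := funext fun q' => by rw [hFAq q']
  have e2fun : (fun q' : ℂ × ℂ => (q'.1 - q'.2) • (pdM2 G q' * (G q')⁻¹))
      = fun q' => (q'.1 - q'.2) • FB q' := funext fun q' => by rw [hFBq q']
  rw [e1fun, e2fun] at hE
  have t1e : pdM2 (fun q' : ℂ × ℂ => (q'.1 - q'.2) • FA q') (a, b)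
      = (-1 : ℂ) • FA (a, b) + (a - b) • pdM2 FA (a, b) := by
    rw [pdM2_smulfn (c := fun q' : ℂ × ℂ => q'.1 - q'.2) (F := FA) (hcd (a, b))
      (fun i j => (hFAd i j) (a, b)), pd2_fst_sub_snd]
  have t2e : pdM1 (fun q' : ℂ × ℂ => (q'.1 - q'.2) • FB q') (a, b)
      = (1 : ℂ) • FB (a, b) + (a - b) • pdM1 FB (a, b) := by
    rw [pdM1_smulfn (c := fun q' : ℂ × ℂ => q'.1 - q'.2) (F := FB) (hcd (a, b))
      (fun i j => (hFBd i j) (a, b)), pd1_fst_sub_snd]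
  rw [t1e, t2e, hFAab, hFBab, hpdM2FA, hpdM1FB, hG1Hd2, hG2Hd1] at hE
  -- hE : (-1) • A + (a-b) • (M*H + -(A*B)) + ((1:ℂ) • B + (a-b) • (M*H + -(B*A))) = 0
  have hErn2 : (a - b) • (M * H - A * B) + (a - b) • (M * H - B * A) = A - B := by
    rw [← sub_eq_zero]
    have hmod : (a - b) • (M * H - A * B) + (a - b) • (M * H - B * A) - (A - B)
        = (-1 : ℂ) • A + (a - b) • (M * H + -(A * B))
          + ((1 : ℂ) • B + (a - b) • (M * H + -(B * A))) := by
      module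
    rw [hmod, hE]
  -- the trace computation for the LHS of the goal
  set S1 : ℂ × ℂ → ℂ := fun q => ∑ i, ∑ j, FA q i j * FA q j i with hS1def
  set S2 : ℂ × ℂ → ℂ := fun q => ∑ i, ∑ j, FB q i j * FB q j i with hS2def
  have hS1d : ∀ i j, DifferentiableAt ℂ (fun q => FA q i j * FA q j i) (a, b) :=
    fun i j => ((hFAd i j) _).mul ((hFAd j i) _)
  have hS2d : ∀ i j, DifferentiableAt ℂ (fun q => FB q i j * FB q j i) (a, b) :=
    fun i j => ((hFBd i j) _).mul ((hFBd j i) _)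
  have hS1dAt : DifferentiableAt ℂ S1 (a, b) :=
    DifferentiableAt.fun_sum (fun i _ => DifferentiableAt.fun_sum (fun j _ => hS1d i j))
  have hS2dAt : DifferentiableAt ℂ S2 (a, b) :=
    DifferentiableAt.fun_sum (fun i _ => DifferentiableAt.fun_sum (fun j _ => hS2d i j))
  have hS1val : S1 (a, b) = Matrix.trace (A * A) := by
    rw [hS1def]
    show ∑ i, ∑ j, FA (a, b) i j * FA (a, b) j i = _
    rw [trace_form, hFAab]
  have hS2val : S2 (a, b) = Matrix.trace (B * B) := by
    rw [hS2def]
    show ∑ i, ∑ j, FB (a, b) i j * FB (a, b) j i = _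
    rw [trace_form, hFBab]
  have hpd2S1 : pd2 S1 (a, b)
      = Matrix.trace ((M * H - A * B) * A) + Matrix.trace (A * (M * H - A * B)) := by
    have h0 : pd2 S1 (a, b) = ∑ i, ∑ j, pd2 (fun q => FA q i j * FA q j i) (a, b) := by
      rw [hS1def, pd2_sum (fun i _ => DifferentiableAt.fun_sum (fun j _ => hS1d i j))]
      exact Finset.sum_congr rfl fun i _ => pd2_sum (fun j _ => hS1d i j)
    rw [h0]
    have h1 : ∀ i j, pd2 (fun q => FA q i j * FA q j i) (a, b)
        = (M * H - A * B) i j * A j i + A i j * (M * H - A * B) j i := by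
      intro i j
      rw [pd2_mul ((hFAd i j) _) ((hFAd j i) _)]
      have ha : ∀ k l, pd2 (fun q => FA q k l) (a, b) = (M * H - A * B) k l := by
        intro k l
        have : pd2 (fun q => FA q k l) (a, b) = pdM2 FA (a, b) k l := rfl
        rw [this, hpdM2FA, hG1Hd2, ← sub_eq_add_neg]
      rw [ha i j, ha j i, hFAab]
    calc (∑ i, ∑ j, pd2 (fun q => FA q i j * FA q j i) (a, b))
        = ∑ i, ∑ j, ((M * H - A * B) i j * A j i + A i j * (M * H - A * B) j i) :=
          Finset.sum_congr rfl fun i _ => Finset.sum_congr rfl fun j _ => h1 i j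
      _ = _ := by
          simp only [Finset.sum_add_distrib]
          rw [trace_form, trace_form]
  have hpd1S2 : pd1 S2 (a, b)
      = Matrix.trace ((M * H - B * A) * B) + Matrix.trace (B * (M * H - B * A)) := by
    have h0 : pd1 S2 (a, b) = ∑ i, ∑ j, pd1 (fun q => FB q i j * FB q j i) (a, b) := by
      rw [hS2def, pd1_sum (fun i _ => DifferentiableAt.fun_sum (fun j _ => hS2d i j))]
      exact Finset.sum_congr rfl fun i _ => pd1_sum (fun j _ => hS2d i j)
    rw [h0]
    have h1 : ∀ i j, pd1 (fun q => FB q i j * FB q j i) (a, b)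
        = (M * H - B * A) i j * B j i + B i j * (M * H - B * A) j i := by
      intro i j
      rw [pd1_mul ((hFBd i j) _) ((hFBd j i) _)]
      have ha : ∀ k l, pd1 (fun q => FB q k l) (a, b) = (M * H - B * A) k l := by
        intro k l
        have : pd1 (fun q => FB q k l) (a, b) = pdM1 FB (a, b) k l := rfl
        rw [this, hpdM1FB, hG2Hd1, ← sub_eq_add_neg]
      rw [ha i j, ha j i, hFBab]
    calc (∑ i, ∑ j, pd1 (fun q => FB q i j * FB q j i) (a, b))
        = ∑ i, ∑ j, ((M * H - B * A) i j * B j i + B i j * (M * H - B * A) j i) :=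
          Finset.sum_congr rfl fun i _ => Finset.sum_congr rfl fun j _ => h1 i j
      _ = _ := by
          simp only [Finset.sum_add_distrib]
          rw [trace_form, trace_form]
  -- rewrite the two sides of the goal
  have hLHS : pd2 (fun q => (q.1 - q.2) / 4 * Matrix.trace ((pdM1 G q * (G q)⁻¹) ^ 2)) (a, b)
      = -(1/4) * Matrix.trace (A * A)
        + (a - b) / 4 * (Matrix.trace ((M * H - A * B) * A)
            + Matrix.trace (A * (M * H - A * B))) := by
    have hfe : (fun q : ℂ × ℂ => (q.1 - q.2) / 4 * Matrix.trace ((pdM1 G q * (G q)⁻¹) ^ 2))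
        = fun q => (q.1 - q.2) / 4 * S1 q := by
      funext q
      congr 1
      rw [sq, hFAq q, ← trace_form, hS1def]
    have hcd4 : Differentiable ℂ (fun q : ℂ × ℂ => (q.1 - q.2) / 4) := by
      simp only [div_eq_mul_inv]
      exact hcd.mul_const _
    rw [hfe, pd2_mul (hcd4 (a, b)) hS1dAt, pd2_c4, hpd2S1, hS1val]
  have hRHS : pd1 (fun q => (q.2 - q.1) / 4 * Matrix.trace ((pdM2 G q * (G q)⁻¹) ^ 2)) (a, b)
      = -(1/4) * Matrix.trace (B * B)
        + (b - a) / 4 * (Matrix.trace ((M * H - B * A) * B)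
            + Matrix.trace (B * (M * H - B * A))) := by
    have hfe : (fun q : ℂ × ℂ => (q.2 - q.1) / 4 * Matrix.trace ((pdM2 G q * (G q)⁻¹) ^ 2))
        = fun q => (q.2 - q.1) / 4 * S2 q := by
      funext q
      congr 1
      rw [sq, hFBq q, ← trace_form, hS2def]
    have hcd' : Differentiable ℂ (fun q : ℂ × ℂ => (q.2 - q.1) / 4) := by
      simp only [div_eq_mul_inv]
      exact (differentiable_snd.sub differentiable_fst).mul_const _
    rw [hfe, pd1_mul (hcd' (a, b)) hS2dAt, pd1_c4, hpd1S2, hS2val]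
  rw [hLHS, hRHS]
  -- final scalar algebra using the Ernst relation
  have e1 := congrArg (fun X => Matrix.trace (A * X)) hErn2
  have e2 := congrArg (fun X => Matrix.trace (B * X)) hErn2
  simp only [Matrix.mul_add, Matrix.mul_smul, Matrix.mul_sub, Matrix.trace_add,
    Matrix.trace_smul, Matrix.trace_sub, smul_eq_mul] at e1 e2
  have tc1 : Matrix.trace ((M * H - A * B) * A) = Matrix.trace (A * (M * H - A * B)) :=
    Matrix.trace_mul_comm _ _
  have tc2 : Matrix.trace ((M * H - B * A) * B) = Matrix.trace (B * (M * H - B * A)) :=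
    Matrix.trace_mul_comm _ _
  have tAB : Matrix.trace (A * (B * A)) = Matrix.trace (A * (A * B)) := by
    rw [← Matrix.mul_assoc]
    exact Matrix.trace_mul_comm _ _
  have tBA : Matrix.trace (B * (A * B)) = Matrix.trace (B * (B * A)) := by
    rw [← Matrix.mul_assoc]
    exact Matrix.trace_mul_comm _ _
  have tABc : Matrix.trace (A * B) = Matrix.trace (B * A) := Matrix.trace_mul_comm _ _
  rw [tc1, tc2]
  simp only [Matrix.mul_sub, Matrix.trace_sub] at *
  linear_combination (1/4 : ℂ) * e1 + (1/4 : ℂ) * e2 + ((a - b)/4) * tAB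
    + ((a - b)/4) * tBA - (1/4 : ℂ) * tABc
end

section
/- Suppose functions f(λ₁,…,λ_M) and v_m(λ₁,…,λ_M) (m = 1,…,M, v_m ≠ 0) satisfy, for all m ≠ n: ∂²f/∂λ_m∂λ_n = (b_{mn}/2)[(v_n/v_m)∂f/∂λ_m + (v_m/v_n)∂f/∂λ_n] and ∂v_n/∂λ_m = (b_{mn}/2) v_m, where b_{mn} = b_{nm}. Then the functions g_m := (∂f/∂λ_m / v_m)² satisfy ∂g_m/∂λ_n = b_{mn} (∂f/∂λ_m)(∂f/∂λ_n)/(v_m v_n) for m ≠ n; in particular ∂g_m/∂λ_n = ∂g_n/∂λ_m, so locally there is a function ln τ with ∂(ln τ)/∂λ_m = g_m. -/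
section Stmt14Aux

open Metric Set MeasureTheory Interval

variable {M : ℕ}

lemma s14_update_eq (Λ : Fin M → ℂ) (k : Fin M) (x : ℂ) :
    Function.update Λ k x = Λ + (x - Λ k) • (Pi.single k 1 : Fin M → ℂ) := by
  funext j
  rcases eq_or_ne j k with rfl | h
  · simp
  · simp [Function.update_of_ne h, Pi.single_apply, h]

lemma s14_hasDerivAt_update (Λ : Fin M → ℂ) (k : Fin M) (x₀ : ℂ) :
    HasDerivAt (fun x => Function.update Λ k x) (Pi.single k 1 : Fin M → ℂ) x₀ := by
  simp only [s14_update_eq Λ k]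
  have h : HasDerivAt (fun x : ℂ => x - Λ k) 1 x₀ := (hasDerivAt_id x₀).sub_const _
  simpa using (h.smul_const (Pi.single k (1:ℂ) : Fin M → ℂ)).const_add Λ

lemma s14_comp_update {φ : (Fin M → ℂ) → ℂ} {Λ : Fin M → ℂ} (k : Fin M)
    (h : DifferentiableAt ℂ φ Λ) :
    HasDerivAt (fun x => φ (Function.update Λ k x))
      (fderiv ℂ φ Λ (Pi.single k 1 : Fin M → ℂ)) (Λ k) := by
  have h2 : HasFDerivAt φ (fderiv ℂ φ Λ) (Function.update Λ k (Λ k)) := by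
    rw [Function.update_eq_self]; exact h.hasFDerivAt
  exact h2.comp_hasDerivAt _ (s14_hasDerivAt_update Λ k (Λ k))

lemma s14_clm_sum' (L : (Fin M → ℂ) →L[ℂ] ℂ) (u : Fin M → ℂ) :
    L u = ∑ m, u m * L (Pi.single m 1 : Fin M → ℂ) := by
  have hu : u = ∑ m, u m • (Pi.single m (1:ℂ) : Fin M → ℂ) := by
    funext j; simp [Finset.sum_apply, Pi.single_apply]
  conv_lhs => rw [hu]
  rw [map_sum]
  simp [smul_eq_mul]

lemma s14_cauchy {g : (Fin M → ℂ) → ℂ} {s : Set (Fin M → ℂ)} (hs : IsOpen s)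
    (hg : DifferentiableOn ℂ g s) {y w : Fin M → ℂ} {r C : ℝ} (hr : 0 < r)
    (hmem : ∀ ζ : ℂ, ‖ζ‖ ≤ r → y + ζ • w ∈ s)
    (hC : ∀ ζ : ℂ, ‖ζ‖ ≤ r → ‖g (y + ζ • w)‖ ≤ C) :
    ‖fderiv ℂ g y w‖ ≤ C / r := by
  set h : ℂ → ℂ := fun ζ => g (y + ζ • w) with hh
  have hline : ∀ ζ₀ : ℂ, HasDerivAt (fun ζ : ℂ => y + ζ • w) w ζ₀ := fun ζ₀ => by
    simpa using ((hasDerivAt_id ζ₀).smul_const w).const_add y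
  have hdiff : ∀ ζ : ℂ, ‖ζ‖ ≤ r → HasDerivAt h (fderiv ℂ g (y + ζ • w) w) ζ := by
    intro ζ hζ
    have hg' : DifferentiableAt ℂ g (y + ζ • w) :=
      (hg.differentiableAt (hs.mem_nhds (hmem ζ hζ)))
    exact hg'.hasFDerivAt.comp_hasDerivAt _ (hline ζ)
  have hdON : DiffContOnCl ℂ h (ball 0 r) := by
    have : DifferentiableOn ℂ h (closedBall 0 r) := fun ζ hζ =>
      ((hdiff ζ (by simpa [mem_closedBall_zero_iff] using hζ)).differentiableAt).differentiableWithinAt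
    exact DifferentiableOn.diffContOnCl (by rwa [closure_ball 0 hr.ne'])
  have hd0 : deriv h 0 = fderiv ℂ g y w := by
    have := (hdiff 0 (by simp [hr.le])).deriv
    simpa using this
  rw [← hd0]
  exact Complex.norm_deriv_le_of_forall_mem_sphere_norm_le hr hdON
    (fun z hz => hC z (by simp [mem_sphere_iff_norm] at hz; simp [hz]))

lemma s14_coe_smul (t : ℝ) (u : Fin M → ℂ) : (t:ℂ) • u = t • u := by
  rw [← Complex.coe_algebraMap, algebraMap_smul]

lemma s14_poincare {B : Set (Fin M → ℂ)} (hB : IsOpen B) (hBc : Convex ℝ B)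
    (g : Fin M → (Fin M → ℂ) → ℂ) (hg : ∀ m, DifferentiableOn ℂ (g m) B)
    (hsym : ∀ Λ ∈ B, ∀ m n : Fin M,
      fderiv ℂ (g m) Λ (Pi.single n 1 : Fin M → ℂ)
        = fderiv ℂ (g n) Λ (Pi.single m 1 : Fin M → ℂ)) :
    ∃ φ : (Fin M → ℂ) → ℂ, ∀ Λ ∈ B, ∀ k : Fin M,
      HasDerivAt (fun x => φ (Function.update Λ k x)) (g k Λ) (Λ k) := by
  rcases B.eq_empty_or_nonempty with rfl | ⟨Λ₀, hΛ₀⟩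
  · exact ⟨0, by simp⟩
  refine ⟨fun Λ => ∫ t in (0:ℝ)..1, ∑ m, (Λ m - Λ₀ m) * g m (Λ₀ + (t:ℂ) • (Λ - Λ₀)), ?_⟩
  intro Λ hΛ k
  show HasDerivAt (fun x => ∫ t in (0:ℝ)..1,
      ∑ m, (Function.update Λ k x m - Λ₀ m)
        * g m (Λ₀ + (t:ℂ) • (Function.update Λ k x - Λ₀))) (g k Λ) (Λ k)
  -- the path
  set p : ℝ → ℂ → (Fin M → ℂ) :=
    fun t x => Λ₀ + (t:ℂ) • (Function.update Λ k x - Λ₀) with hp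
  have hupd : Continuous (fun x : ℂ => Function.update Λ k x) :=
    continuous_iff_continuousAt.2 fun x => (s14_hasDerivAt_update Λ k x).continuousAt
  -- choose ε
  obtain ⟨ε, εpos, hε⟩ : ∃ ε > 0, ∀ x ∈ closedBall (Λ k) ε, Function.update Λ k x ∈ B := by
    have hopen : IsOpen ((fun x : ℂ => Function.update Λ k x) ⁻¹' B) := hB.preimage hupd
    have hmem : Λ k ∈ (fun x : ℂ => Function.update Λ k x) ⁻¹' B := by
      simp only [mem_preimage, Function.update_eq_self]; exact hΛ
    obtain ⟨δ, δpos, hδ⟩ := Metric.isOpen_iff.1 hopen _ hmem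
    exact ⟨δ/2, by positivity, fun x hx => hδ (lt_of_le_of_lt hx (half_lt_self δpos))⟩
  have hpB : ∀ t ∈ Icc (0:ℝ) 1, ∀ x ∈ closedBall (Λ k) ε, p t x ∈ B := by
    intro t ht x hx
    have hu : Function.update Λ k x ∈ B := hε x hx
    have key : p t x = (1-t) • Λ₀ + t • (Function.update Λ k x) := by
      simp only [hp]; rw [← Complex.coe_algebraMap, algebraMap_smul]; module
    rw [key]
    exact hBc hΛ₀ hu (by linarith [ht.2]) ht.1 (by ring)
  -- the compact sets
  have hcontp : Continuous (fun q : ℝ × ℂ => p q.1 q.2) := by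
    exact continuous_const.add ((Complex.continuous_ofReal.comp continuous_fst).smul
      (((hupd.comp continuous_snd)).sub continuous_const))
  set K : Set (Fin M → ℂ) :=
    (fun q : ℝ × ℂ => p q.1 q.2) '' (Icc (0:ℝ) 1 ×ˢ closedBall (Λ k) ε) with hK
  have hKcomp : IsCompact K := (isCompact_Icc.prod (isCompact_closedBall _ _)).image hcontp
  have hKB : K ⊆ B := by
    rintro - ⟨⟨t, x⟩, ⟨ht, hx⟩, rfl⟩; exact hpB t ht x hx
  have hKmem : ∀ t ∈ Icc (0:ℝ) 1, ∀ x ∈ closedBall (Λ k) ε, p t x ∈ K :=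
    fun t ht x hx => ⟨(t, x), ⟨ht, hx⟩, rfl⟩
  obtain ⟨δ, δpos, hδ⟩ := hKcomp.exists_thickening_subset_open hB hKB
  set K' : Set (Fin M → ℂ) := cthickening (δ/2) K with hK'
  have hK'comp : IsCompact K' := hKcomp.cthickening
  have hK'B : K' ⊆ B := (cthickening_subset_thickening' δpos (half_lt_self δpos) K).trans hδ
  have hKK' : K ⊆ K' := self_subset_cthickening K
  -- bounds
  have hCex : ∀ m : Fin M, ∃ C : ℝ, ∀ y ∈ K', ‖g m y‖ ≤ C := fun m =>
    hK'comp.exists_bound_of_continuousOn ((hg m).continuousOn.mono hK'B)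
  choose C hC using hCex
  have hKne : (p 0 (Λ k)) ∈ K :=
    hKmem 0 (by simp) (Λ k) (mem_closedBall_self εpos.le)
  have hC0 : ∀ m, 0 ≤ C m := fun m =>
    le_trans (norm_nonneg _) (hC m _ (hKK' hKne))
  set w : Fin M → ℂ := (Pi.single k 1 : Fin M → ℂ) with hw
  set r : ℝ := (δ/2) / (‖w‖ + 1) with hr
  have rpos : 0 < r := by positivity
  have hDer : ∀ m : Fin M, ∀ y ∈ K, ‖fderiv ℂ (g m) y w‖ ≤ C m / r := by
    intro m y hy
    have hmem' : ∀ ζ : ℂ, ‖ζ‖ ≤ r → y + ζ • w ∈ K' := by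
      intro ζ hζ
      apply mem_cthickening_of_dist_le _ y _ _ hy
      have : dist (y + ζ • w) y = ‖ζ‖ * ‖w‖ := by
        simp [dist_eq_norm, norm_smul]
      rw [this]
      calc ‖ζ‖ * ‖w‖ ≤ r * ‖w‖ := by gcongr
        _ = (δ/2) * (‖w‖ / (‖w‖+1)) := by rw [hr]; ring
        _ ≤ (δ/2) * 1 := by
            gcongr
            rw [div_le_one (by positivity)]; linarith
        _ = δ/2 := mul_one _
    exact s14_cauchy hB (hg m) rpos (fun ζ hζ => hK'B (hmem' ζ hζ))
      (fun ζ hζ => hC m _ (hmem' ζ hζ))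
  -- the parametrized integrand and its x-derivative
  set F : ℂ → ℝ → ℂ := fun x t =>
    (x - Λ₀ k) * g k (p t x)
      + ∑ m ∈ Finset.univ.erase k, (Λ m - Λ₀ m) * g m (p t x) with hF
  set F' : ℂ → ℝ → ℂ := fun x t =>
    g k (p t x) + (t:ℂ) * ((x - Λ₀ k) * fderiv ℂ (g k) (p t x) w
      + ∑ m ∈ Finset.univ.erase k, (Λ m - Λ₀ m) * fderiv ℂ (g m) (p t x) w) with hF'
  have hIsub : Ι (0:ℝ) 1 ⊆ Icc 0 1 := by
    rw [uIoc_of_le zero_le_one]; exact Ioc_subset_Icc_self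
  have hpathc : Continuous (fun t : ℝ => p t (Λ k)) :=
    hcontp.comp (continuous_id.prodMk continuous_const)
  have hcont : ∀ x ∈ closedBall (Λ k) ε, ContinuousOn (fun t => F x t) (Icc (0:ℝ) 1) := by
    intro x hx
    have hpath : ∀ m : Fin M, ContinuousOn (fun t : ℝ => g m (p t x)) (Icc 0 1) := by
      intro m
      exact ((hg m).continuousOn).comp
        ((hcontp.comp (continuous_id.prodMk continuous_const)).continuousOn)
        (fun t ht => hpB t ht x hx)
    exact (continuousOn_const.mul (hpath k)).add
      (continuousOn_finset_sum _ fun m _ => continuousOn_const.mul (hpath m))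
  have hΛkmem : Λ k ∈ closedBall (Λ k) ε := mem_closedBall_self εpos.le
  have hF_meas : ∀ᶠ x in nhds (Λ k),
      AEStronglyMeasurable (F x) (volume.restrict (Ι (0:ℝ) 1)) := by
    filter_upwards [Metric.closedBall_mem_nhds (Λ k) εpos] with x hx
    exact (ContinuousOn.mono (hcont x hx) hIsub).aestronglyMeasurable measurableSet_uIoc
  have hF_int : IntervalIntegrable (F (Λ k)) volume 0 1 := by
    apply ContinuousOn.intervalIntegrable
    rw [uIcc_of_le zero_le_one]; exact hcont _ hΛkmem
  have hF'_meas : AEStronglyMeasurable (F' (Λ k)) (volume.restrict (Ι (0:ℝ) 1)) := by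
    have h1 : ContinuousOn (fun t : ℝ => g k (p t (Λ k))) (Ι (0:ℝ) 1) := by
      apply ContinuousOn.mono _ hIsub
      exact ((hg k).continuousOn).comp hpathc.continuousOn
        (fun t ht => hpB t ht (Λ k) hΛkmem)
    have h2 : Measurable (fun t : ℝ => (t:ℂ) * ((Λ k - Λ₀ k) * fderiv ℂ (g k) (p t (Λ k)) w
        + ∑ m ∈ Finset.univ.erase k, (Λ m - Λ₀ m) * fderiv ℂ (g m) (p t (Λ k)) w)) := by
      apply Measurable.mul
      · exact Complex.measurable_ofReal
      · apply Measurable.add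
        · exact measurable_const.mul
            ((measurable_fderiv_apply_const ℂ (g k) w).comp hpathc.measurable)
        · exact Finset.measurable_sum _ fun m _ => measurable_const.mul
            ((measurable_fderiv_apply_const ℂ (g m) w).comp hpathc.measurable)
    exact (h1.aestronglyMeasurable measurableSet_uIoc).add h2.aestronglyMeasurable
  set bd : ℝ := C k + ((‖Λ k - Λ₀ k‖ + ε) * (C k / r)
      + ∑ m ∈ Finset.univ.erase k, ‖Λ m - Λ₀ m‖ * (C m / r)) with hbd
  have h_bound : ∀ᵐ t ∂(volume : Measure ℝ), t ∈ Ι (0:ℝ) 1 →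
      ∀ x ∈ ball (Λ k) ε, ‖F' x t‖ ≤ bd := by
    refine Filter.Eventually.of_forall fun t ht x hx => ?_
    have htI : t ∈ Icc (0:ℝ) 1 := hIsub ht
    have hxc : x ∈ closedBall (Λ k) ε := ball_subset_closedBall hx
    have hpK : p t x ∈ K := hKmem t htI x hxc
    have hxb : ‖x - Λ₀ k‖ ≤ ‖Λ k - Λ₀ k‖ + ε := by
      have h1 : ‖x - Λ₀ k‖ ≤ ‖x - Λ k‖ + ‖Λ k - Λ₀ k‖ := by
        simpa using norm_add_le (x - Λ k) (Λ k - Λ₀ k)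
      have h2 : ‖x - Λ k‖ ≤ ε := mem_closedBall_iff_norm.1 hxc
      linarith
    have htn : ‖(t:ℂ)‖ ≤ 1 := by
      rw [Complex.norm_real, Real.norm_eq_abs, abs_of_nonneg htI.1]; exact htI.2
    have hin : ‖(x - Λ₀ k) * fderiv ℂ (g k) (p t x) w
        + ∑ m ∈ Finset.univ.erase k, (Λ m - Λ₀ m) * fderiv ℂ (g m) (p t x) w‖
        ≤ (‖Λ k - Λ₀ k‖ + ε) * (C k / r)
          + ∑ m ∈ Finset.univ.erase k, ‖Λ m - Λ₀ m‖ * (C m / r) := by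
      refine (norm_add_le _ _).trans (add_le_add ?_ ?_)
      · rw [norm_mul]
        exact mul_le_mul hxb (hDer k _ hpK) (norm_nonneg _) (by positivity)
      · refine (norm_sum_le _ _).trans (Finset.sum_le_sum fun m _ => ?_)
        rw [norm_mul]
        exact mul_le_mul_of_nonneg_left (hDer m _ hpK) (norm_nonneg _)
    have h1 : ‖g k (p t x)‖ ≤ C k := hC k _ (hKK' hpK)
    have h2 := mul_le_mul htn hin (norm_nonneg _) zero_le_one
    rw [one_mul] at h2
    simp only [hF']
    refine (norm_add_le _ _).trans ?_
    rw [norm_mul, hbd]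
    linarith
  have h_diff : ∀ᵐ t ∂(volume : Measure ℝ), t ∈ Ι (0:ℝ) 1 →
      ∀ x ∈ ball (Λ k) ε, HasDerivAt (fun x' => F x' t) (F' x t) x := by
    refine Filter.Eventually.of_forall fun t ht x hx => ?_
    have htI : t ∈ Icc (0:ℝ) 1 := hIsub ht
    have hxc : x ∈ closedBall (Λ k) ε := ball_subset_closedBall hx
    have hpd : HasDerivAt (fun x' : ℂ => p t x') ((t:ℂ) • w) x := by
      simp only [hp]
      exact (((s14_hasDerivAt_update Λ k x).sub_const Λ₀).const_smul ((t:ℂ))).const_add Λ₀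
    have hgm : ∀ m : Fin M, HasDerivAt (fun x' => g m (p t x'))
        ((t:ℂ) * fderiv ℂ (g m) (p t x) w) x := by
      intro m
      have hd : HasFDerivAt (g m) (fderiv ℂ (g m) (p t x)) (p t x) :=
        ((hg m).differentiableAt (hB.mem_nhds (hpB t htI x hxc))).hasFDerivAt
      have := hd.comp_hasDerivAt x hpd
      exact this.congr_deriv (by simp [_root_.map_smul, smul_eq_mul])
    have h1 : HasDerivAt (fun x' => (x' - Λ₀ k) * g k (p t x'))
        (1 * g k (p t x) + (x - Λ₀ k) * ((t:ℂ) * fderiv ℂ (g k) (p t x) w)) x :=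
      ((hasDerivAt_id x).sub_const _).mul (hgm k)
    have h2 : HasDerivAt (fun x' => ∑ m ∈ Finset.univ.erase k, (Λ m - Λ₀ m) * g m (p t x'))
        (∑ m ∈ Finset.univ.erase k, (Λ m - Λ₀ m) * ((t:ℂ) * fderiv ℂ (g m) (p t x) w)) x :=
      HasDerivAt.fun_sum fun m _ => (hgm m).const_mul _
    refine (h1.add h2).congr_deriv ?_
    simp only [hF']
    rw [mul_add, Finset.mul_sum]
    have hs : ∑ m ∈ Finset.univ.erase k,
        (t:ℂ) * ((Λ m - Λ₀ m) * fderiv ℂ (g m) (p t x) w)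
        = ∑ m ∈ Finset.univ.erase k, (Λ m - Λ₀ m) * ((t:ℂ) * fderiv ℂ (g m) (p t x) w) :=
      Finset.sum_congr rfl fun m _ => by ring
    rw [hs]; ring
  obtain ⟨hF'_int, hder⟩ := intervalIntegral.hasDerivAt_integral_of_dominated_loc_of_deriv_le
    (ball_mem_nhds _ εpos) hF_meas hF_int hF'_meas h_bound intervalIntegrable_const h_diff
  
  have hfun : (fun x : ℂ => ∫ t in (0:ℝ)..1,
      ∑ m, (Function.update Λ k x m - Λ₀ m)
        * g m (Λ₀ + (t:ℂ) • (Function.update Λ k x - Λ₀)))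
      = fun x => ∫ t in (0:ℝ)..1, F x t := by
    funext x
    congr 1
    funext t
    simp only [hF, hp]
    rw [← Finset.sum_erase_add _ _ (Finset.mem_univ k), Function.update_self, add_comm]
    congr 1
    exact Finset.sum_congr rfl fun m hm => by
      rw [Function.update_of_ne (Finset.mem_erase.1 hm).1]
  have hus : Function.update Λ k (Λ k) = Λ := Function.update_eq_self k Λ
  have hval : ∫ t in (0:ℝ)..1, F' (Λ k) t = g k Λ := by
    have hftc : ∀ t ∈ uIcc (0:ℝ) 1,
        HasDerivAt (fun s : ℝ => (s:ℂ) * g k (p s (Λ k))) (F' (Λ k) t) t := by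
      intro t ht
      have htI : t ∈ Icc (0:ℝ) 1 := by rwa [uIcc_of_le zero_le_one] at ht
      have hcB : p t (Λ k) ∈ B := hpB t htI (Λ k) hΛkmem
      have hct : HasDerivAt (fun s : ℝ => p s (Λ k)) (Λ - Λ₀) t := by
        simp only [hp, hus]
        have h1 : HasDerivAt (fun s : ℝ => (s:ℂ)) 1 t := by
          exact Complex.ofRealCLM.hasDerivAt (x := t)
        simpa using (h1.smul_const (Λ - Λ₀)).const_add Λ₀
      have hgc : HasDerivAt (fun s : ℝ => g k (p s (Λ k)))
          (fderiv ℂ (g k) (p t (Λ k)) (Λ - Λ₀)) t := by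
        have hd : HasFDerivAt (g k) (fderiv ℂ (g k) (p t (Λ k))) (p t (Λ k)) :=
          ((hg k).differentiableAt (hB.mem_nhds hcB)).hasFDerivAt
        have := (hd.restrictScalars ℝ).comp_hasDerivAt t hct
        exact this
      have h1 : HasDerivAt (fun s : ℝ => (s:ℂ)) 1 t := by
        exact Complex.ofRealCLM.hasDerivAt (x := t)
      refine (h1.mul hgc).congr_deriv ?_
      have hexp : fderiv ℂ (g k) (p t (Λ k)) (Λ - Λ₀)
          = ∑ m, (Λ m - Λ₀ m) * fderiv ℂ (g m) (p t (Λ k)) w := by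
        rw [s14_clm_sum' (fderiv ℂ (g k) (p t (Λ k))) (Λ - Λ₀)]
        refine Finset.sum_congr rfl fun m _ => ?_
        rw [Pi.sub_apply, hsym _ hcB k m, hw]
      rw [hexp]
      simp only [hF']
      rw [← Finset.sum_erase_add _ _ (Finset.mem_univ k)]
      ring
    have hsub := intervalIntegral.integral_eq_sub_of_hasDerivAt hftc hF'_int
    rw [hsub]
    simp only [hp, hus]
    norm_num
  rw [hfun, ← hval]
  exact hder

end Stmt14Aux

/-- If `f`, `v_m ≠ 0` satisfy (m ≠ n)
`∂²f/∂λ_m∂λ_n = (b_{mn}/2)[(v_n/v_m)∂f/∂λ_m + (v_m/v_n)∂f/∂λ_n]` and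
`∂v_n/∂λ_m = (b_{mn}/2)v_m` with symmetric `b_{mn}`, then
`g_m := (∂f/∂λ_m / v_m)²` satisfies `∂g_m/∂λ_n = b_{mn}(∂f/∂λ_m)(∂f/∂λ_n)/(v_m v_n)`;
in particular the mixed derivatives are symmetric and locally there is a function
`ln τ` with `∂(ln τ)/∂λ_m = g_m`. -/
theorem stmt14 {M : ℕ} (B : Set (Fin M → ℂ)) (hB : IsOpen B) (hBc : Convex ℝ B)
    (f : (Fin M → ℂ) → ℂ) (v : Fin M → (Fin M → ℂ) → ℂ)
    (b : Fin M → Fin M → (Fin M → ℂ) → ℂ)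
    (hbsym : ∀ (m n : Fin M) (Λ : Fin M → ℂ), b m n Λ = b n m Λ)
    (hv0 : ∀ m, ∀ Λ ∈ B, v m Λ ≠ 0)
    (hreg1 : ∀ m : Fin M, DifferentiableOn ℂ (fun Λ => pcoord m f Λ) B)
    (hreg2 : ∀ m : Fin M, DifferentiableOn ℂ (v m) B)
    (hPDE : ∀ Λ ∈ B, ∀ m n : Fin M, m ≠ n →
      HasDerivAt (fun x => pcoord m f (Function.update Λ n x))
        ((b m n Λ / 2) * ((v n Λ / v m Λ) * pcoord m f Λ
          + (v m Λ / v n Λ) * pcoord n f Λ)) (Λ n))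
    (hvar : ∀ Λ ∈ B, ∀ m n : Fin M, m ≠ n →
      HasDerivAt (fun x => v n (Function.update Λ m x)) ((b m n Λ / 2) * v m Λ) (Λ m)) :
    (∀ Λ ∈ B, ∀ m n : Fin M, m ≠ n →
      HasDerivAt (fun x =>
          (pcoord m f (Function.update Λ n x) / v m (Function.update Λ n x)) ^ 2)
        (b m n Λ * pcoord m f Λ * pcoord n f Λ / (v m Λ * v n Λ)) (Λ n)) ∧
    ∃ logτ : (Fin M → ℂ) → ℂ, ∀ Λ ∈ B, ∀ m : Fin M,
      HasDerivAt (fun x => logτ (Function.update Λ m x))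
        ((pcoord m f Λ / v m Λ) ^ 2) (Λ m) := by
  have part1 : ∀ Λ ∈ B, ∀ m n : Fin M, m ≠ n →
      HasDerivAt (fun x =>
          (pcoord m f (Function.update Λ n x) / v m (Function.update Λ n x)) ^ 2)
        (b m n Λ * pcoord m f Λ * pcoord n f Λ / (v m Λ * v n Λ)) (Λ n) := by
    intro Λ hΛ m n hmn
    have hP := hPDE Λ hΛ m n hmn
    have hQ := hvar Λ hΛ n m hmn.symm
    have hvm := hv0 m Λ hΛ
    have hvn := hv0 n Λ hΛ
    have hvm' : v m (Function.update Λ n (Λ n)) ≠ 0 := by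
      rwa [Function.update_eq_self]
    refine ((hP.div hQ hvm').pow 2).congr_deriv ?_
    simp only [Function.update_eq_self, Pi.div_apply]
    rw [hbsym n m]
    have h1 : v n Λ * (v n Λ)⁻¹ = 1 := mul_inv_cancel₀ hvn
    have h2 : v m Λ ^ 4 * (v m Λ)⁻¹ ^ 4 = 1 := by
      rw [← mul_pow, mul_inv_cancel₀ hvm, one_pow]
    field_simp
    have hL : b m n Λ * pcoord m f Λ * pcoord n f Λ * v n Λ * v m Λ ^ 4
        * (v n Λ)⁻¹ * (v m Λ)⁻¹ ^ 4 = b m n Λ * pcoord m f Λ * pcoord n f Λ := by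
      calc b m n Λ * pcoord m f Λ * pcoord n f Λ * v n Λ * v m Λ ^ 4
          * (v n Λ)⁻¹ * (v m Λ)⁻¹ ^ 4
          = b m n Λ * pcoord m f Λ * pcoord n f Λ
            * (v n Λ * (v n Λ)⁻¹ * (v m Λ ^ 4 * (v m Λ)⁻¹ ^ 4)) := by ring
        _ = b m n Λ * pcoord m f Λ * pcoord n f Λ := by rw [h1, h2]; ring
    linear_combination (pcoord m f Λ * v m Λ * b m n Λ * pcoord n f Λ * 2) * mul_inv_cancel₀ hvm
  have hdiffg : ∀ m : Fin M,
      DifferentiableOn ℂ (fun Λ' => (pcoord m f Λ' / v m Λ') ^ 2) B := by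
    intro m
    have h1 : DifferentiableOn ℂ (fun Λ' => pcoord m f Λ' / v m Λ') B := by
      simp only [div_eq_mul_inv]
      exact (hreg1 m).mul ((hreg2 m).inv fun Λ hΛ => hv0 m Λ hΛ)
    exact h1.pow 2
  have hsymm : ∀ Λ ∈ B, ∀ m n : Fin M,
      fderiv ℂ (fun Λ' => (pcoord m f Λ' / v m Λ') ^ 2) Λ (Pi.single n 1 : Fin M → ℂ)
        = fderiv ℂ (fun Λ' => (pcoord n f Λ' / v n Λ') ^ 2) Λ (Pi.single m 1 : Fin M → ℂ) := by
    intro Λ hΛ m n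
    rcases eq_or_ne m n with rfl | hmn
    · rfl
    · have hm := s14_comp_update (φ := fun Λ' => (pcoord m f Λ' / v m Λ') ^ 2) n
        (((hdiffg m)).differentiableAt (hB.mem_nhds hΛ))
      have hn := s14_comp_update (φ := fun Λ' => (pcoord n f Λ' / v n Λ') ^ 2) m
        (((hdiffg n)).differentiableAt (hB.mem_nhds hΛ))
      rw [← (part1 Λ hΛ m n hmn).unique hm, ← (part1 Λ hΛ n m hmn.symm).unique hn]
      rw [hbsym m n]
      ring
  obtain ⟨φ, hφ⟩ := s14_poincare hB hBc
    (fun m Λ' => (pcoord m f Λ' / v m Λ') ^ 2) hdiffg hsymm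
  exact ⟨part1, φ, fun Λ hΛ m => hφ Λ hΛ m⟩
end
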